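/- arXiv:1001.0448 — 6 statements merged into one kernel-verified Lean document; each statement's English description precedes it below -/
import Mathlib

section
/- Let P be a polytope in the tropical projective space ℝT P^n with corresponding submodule M = φ⁻¹(P) ∪ {−∞} ⊆ ℝT^{n+1}. If M is a straight reflexive ℝT-module, then P is the tropically convex hull of at most n+1 points. -/
/-! # Tropical semifields and tropical modules -/

/-- A tropical semifield: a commutative semiring with idempotent addition
(`⊕` is `+`, `⊙` is `*`, the zero element `−∞` is `0`, the unity is `1`)
in which every nonzero element has a multiplicative inverse. -/
class TropSemifield (k : Type*) extends CommSemiring k where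
  add_idem : ∀ a : k, a + a = a
  exists_inv : ∀ a : k, a ≠ 0 → ∃ b : k, a * b = 1

/-- A tropical semigroup: commutative idempotent monoid, written additively
(the zero element is `−∞`). -/
class TropSemigroup (M : Type*) extends AddCommMonoid M where
  add_idem : ∀ v : M, v + v = v

/-- A module over a tropical semifield. -/
class TropModule (k : Type*) (M : Type*) [TropSemifield k] [TropSemigroup M] extends
    SMul k M where
  mul_smul : ∀ (a b : k) (v : M), (a * b) • v = a • b • v
  one_smul : ∀ v : M, (1 : k) • v = v
  add_smul : ∀ (a b : k) (v : M), (a + b) • v = a • v + b • v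
  smul_add : ∀ (a : k) (v w : M), a • (v + w) = a • v + a • w
  zero_smul : ∀ v : M, (0 : k) • v = 0
  smul_zero : ∀ a : k, a • (0 : M) = 0

/-- The canonical partial order `v ≤ w ↔ v ⊕ w = w`. -/
def tle {M : Type*} [Add M] (v w : M) : Prop := v + w = w

/-- Strict version of the canonical order. -/
def tlt {M : Type*} [Add M] (v w : M) : Prop := tle v w ∧ v ≠ w

/-- The canonical order of `k` is total. -/
def TotallyOrderedTSF (k : Type*) [TropSemifield k] : Prop :=
  ∀ a b : k, tle a b ∨ tle b a

/-- Every nonempty subset of `k` admits an infimum. -/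
def QuasiCompleteTSF (k : Type*) [TropSemifield k] : Prop :=
  ∀ S : Set k, S.Nonempty →
    ∃ c : k, (∀ x ∈ S, tle c x) ∧ ∀ d : k, (∀ x ∈ S, tle d x) → tle d c

/-- `k` is rational: `m`-th roots exist and `k` has no maximum element. -/
def RationalTSF (k : Type*) [TropSemifield k] : Prop :=
  (∀ (a : k) (m : ℕ), m ≠ 0 → ∃ b : k, b ^ m = a) ∧ ∀ a : k, ∃ b : k, tlt a b

instance (priority := 100) TropSemifield.toTropSemigroup (k : Type*) [TropSemifield k] :
    TropSemigroup k :=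
  { (inferInstance : AddCommMonoid k) with add_idem := TropSemifield.add_idem }

instance TropModule.self (k : Type*) [TropSemifield k] : TropModule k k :=
  { (inferInstance : SMul k k) with
    mul_smul := fun a b v => mul_assoc a b v
    one_smul := fun v => one_mul v
    add_smul := fun a b v => add_mul a b v
    smul_add := fun a v w => mul_add a v w
    zero_smul := fun v => zero_mul v
    smul_zero := fun a => mul_zero a }

instance TropSemigroup.pi {ι : Type*} (M : Type*) [TropSemigroup M] :
    TropSemigroup (ι → M) :=
  { Pi.addCommMonoid with add_idem := fun v => funext fun i => TropSemigroup.add_idem (v i) }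

instance TropModule.pi (k : Type*) {ι : Type*} (M : Type*) [TropSemifield k] [TropSemigroup M]
    [TropModule k M] : TropModule k (ι → M) where
  smul a v := fun i => a • v i
  mul_smul a b v := funext fun i => TropModule.mul_smul a b (v i)
  one_smul v := funext fun i => TropModule.one_smul (v i)
  add_smul a b v := funext fun i => TropModule.add_smul a b (v i)
  smul_add a v w := funext fun i => TropModule.smul_add a (v i) (w i)
  zero_smul v := funext fun i => TropModule.zero_smul (v i)
  smul_zero a := funext fun i => TropModule.smul_zero (a := a)

/-! ## Homomorphisms of tropical modules -/

/-- A homomorphism of `k`-modules. -/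
structure TropHom (k : Type*) (M : Type*) (N : Type*) [TropSemifield k] [TropSemigroup M]
    [TropModule k M] [TropSemigroup N] [TropModule k N] where
  toFun : M → N
  map_zero' : toFun 0 = 0
  map_add' : ∀ v w : M, toFun (v + w) = toFun v + toFun w
  map_smul' : ∀ (a : k) (v : M), toFun (a • v) = a • toFun v

namespace TropHom

variable {k M N : Type*} [TropSemifield k] [TropSemigroup M] [TropModule k M]
  [TropSemigroup N] [TropModule k N]

theorem ext' {f g : TropHom k M N} (h : ∀ v, f.toFun v = g.toFun v) : f = g := by
  cases f; cases g
  simp only [mk.injEq]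
  exact funext h

instance : Zero (TropHom k M N) :=
  ⟨⟨fun _ => 0, rfl, fun _ _ => (add_zero (0 : N)).symm,
    fun a _ => (TropModule.smul_zero (M := N) a).symm⟩⟩

instance : Add (TropHom k M N) :=
  ⟨fun f g =>
    { toFun := fun v => f.toFun v + g.toFun v
      map_zero' := by
        show f.toFun 0 + g.toFun 0 = 0
        rw [f.map_zero', g.map_zero', add_zero]
      map_add' := fun v w => by
        show f.toFun (v + w) + g.toFun (v + w) =
          (f.toFun v + g.toFun v) + (f.toFun w + g.toFun w)
        rw [f.map_add', g.map_add', add_add_add_comm]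
      map_smul' := fun a v => by
        show f.toFun (a • v) + g.toFun (a • v) = a • (f.toFun v + g.toFun v)
        rw [f.map_smul', g.map_smul', TropModule.smul_add] }⟩

instance : SMul k (TropHom k M N) :=
  ⟨fun a f =>
    { toFun := fun v => a • f.toFun v
      map_zero' := by
        show a • f.toFun 0 = 0
        rw [f.map_zero', TropModule.smul_zero]
      map_add' := fun v w => by
        show a • f.toFun (v + w) = a • f.toFun v + a • f.toFun w
        rw [f.map_add', TropModule.smul_add]
      map_smul' := fun b v => by
        show a • f.toFun (b • v) = b • (a • f.toFun v)
        rw [f.map_smul', ← TropModule.mul_smul, ← TropModule.mul_smul, mul_comm a b] }⟩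

instance : TropSemigroup (TropHom k M N) where
  add := (· + ·)
  zero := 0
  add_assoc f g h := ext' fun v => add_assoc (f.toFun v) (g.toFun v) (h.toFun v)
  zero_add f := ext' fun v => zero_add (f.toFun v)
  add_zero f := ext' fun v => add_zero (f.toFun v)
  add_comm f g := ext' fun v => add_comm (f.toFun v) (g.toFun v)
  nsmul := nsmulRec
  add_idem f := ext' fun v => TropSemigroup.add_idem (f.toFun v)

instance : TropModule k (TropHom k M N) where
  smul := (· • ·)
  mul_smul a b f := ext' fun v => TropModule.mul_smul a b (f.toFun v)
  one_smul f := ext' fun v => TropModule.one_smul (f.toFun v)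
  add_smul a b f := ext' fun v => TropModule.add_smul a b (f.toFun v)
  smul_add a f g := ext' fun v => TropModule.smul_add a (f.toFun v) (g.toFun v)
  zero_smul f := ext' fun v => TropModule.zero_smul (f.toFun v)
  smul_zero a := ext' fun v => TropModule.smul_zero (M := N) a

end TropHom

/-- The canonical map `M → (M∨)∨`, `v ↦ (ξ ↦ ⟨v, ξ⟩)`. -/
def iotaFun (k : Type*) (M : Type*) [TropSemifield k] [TropSemigroup M] [TropModule k M] :
    M → TropHom k (TropHom k M k) k :=
  fun v => ⟨fun ξ => ξ.toFun v, rfl, fun ξ η => rfl, fun a ξ => rfl⟩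

/-! ## Order-theoretic notions -/

/-- `z` is the infimum of `v` and `w` w.r.t. the canonical order. -/
def IsTInf {M : Type*} [Add M] (v w z : M) : Prop :=
  tle z v ∧ tle z w ∧ ∀ y : M, tle y v → tle y w → tle y z

/-- A tropical module is straight if it is a finitely distributive ordered lattice. -/
def Straight (M : Type*) [Add M] : Prop :=
  (∀ v w : M, ∃ z : M, IsTInf v w z) ∧
    ∀ v₁ v₂ w z₁ z₂ : M, IsTInf v₁ w z₁ → IsTInf v₂ w z₂ → IsTInf (v₁ + v₂) w (z₁ + z₂)

/-- Infimum of `v` and `w` within the subset `N`. -/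
def IsTInfOn {M : Type*} [Add M] (N : Set M) (v w z : M) : Prop :=
  tle z v ∧ tle z w ∧ ∀ y ∈ N, tle y v → tle y w → tle y z

/-- A submodule (viewed as a subset) is straight. -/
def StraightSet {M : Type*} [Add M] (N : Set M) : Prop :=
  (∀ v ∈ N, ∀ w ∈ N, ∃ z ∈ N, IsTInfOn N v w z) ∧
    ∀ v₁ ∈ N, ∀ v₂ ∈ N, ∀ w ∈ N, ∀ z₁ ∈ N, ∀ z₂ ∈ N,
      IsTInfOn N v₁ w z₁ → IsTInfOn N v₂ w z₂ → IsTInfOn N (v₁ + v₂) w (z₁ + z₂)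

/-! ## Generation, bases, extremal elements -/

/-- `S` generates the `k`-module `M`. -/
def TGenerates (k : Type*) {M : Type*} [TropSemifield k] [TropSemigroup M] [TropModule k M]
    (S : Set M) : Prop :=
  ∀ v : M, ∃ (r : ℕ) (a : Fin r → k) (x : Fin r → M), (∀ i, x i ∈ S) ∧ v = ∑ i, a i • x i

/-- `M` is finitely generated. -/
def TFG (k : Type*) (M : Type*) [TropSemifield k] [TropSemigroup M] [TropModule k M] : Prop :=
  ∃ S : Finset M, TGenerates k (↑S : Set M)

/-- A basis: a generating set no proper subset of which generates. -/
def TBasis (k : Type*) {M : Type*} [TropSemifield k] [TropSemigroup M] [TropModule k M]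
    (S : Set M) : Prop :=
  TGenerates k S ∧ ∀ T : Set M, T ⊂ S → ¬ TGenerates k T

/-- `S` generates the subset `N` (viewed as a submodule of `M`). -/
def TGeneratesOn (k : Type*) {M : Type*} [TropSemifield k] [TropSemigroup M] [TropModule k M]
    (N S : Set M) : Prop :=
  ∀ v ∈ N, ∃ (r : ℕ) (a : Fin r → k) (x : Fin r → M), (∀ i, x i ∈ S) ∧ v = ∑ i, a i • x i

/-- A basis of the submodule `N ⊆ M`. -/
def TBasisOn (k : Type*) {M : Type*} [TropSemifield k] [TropSemigroup M] [TropModule k M]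
    (N S : Set M) : Prop :=
  S ⊆ N ∧ TGeneratesOn k N S ∧ ∀ T : Set M, T ⊂ S → ¬ TGeneratesOn k N T

/-- An extremal element. -/
def TExtremal {M : Type*} [Add M] [Zero M] (e : M) : Prop :=
  e ≠ 0 ∧ ∀ v w : M, v + w = e → v = e ∨ w = e

/-- The ray `k ⊙ e` generated by an element. -/
def tray (k : Type*) {M : Type*} [TropSemifield k] [TropSemigroup M] [TropModule k M]
    (e : M) : Set M :=
  Set.range fun a : k => a • e

/-- The set of extremal rays of `M`. -/
def extRays (k : Type*) (M : Type*) [TropSemifield k] [TropSemigroup M] [TropModule k M] :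
    Set (Set M) :=
  {R : Set M | ∃ e : M, TExtremal e ∧ R = tray k e}

/-- The dimension of a straight reflexive module: the number of extremal rays. -/
noncomputable def tdim (k : Type*) (M : Type*) [TropSemifield k] [TropSemigroup M]
    [TropModule k M] : ℕ :=
  (extRays k M).ncard

/-! ## Further notions on homomorphisms -/

/-- A lightly surjective homomorphism. -/
def LightlySurjective {k M N : Type*} [TropSemifield k] [TropSemigroup M] [TropModule k M]
    [TropSemigroup N] [TropModule k N] (α : TropHom k M N) : Prop :=
  ∀ w : N, ∃ v : M, tle w (α.toFun v)

/-- A lattice-preserving homomorphism. -/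
def LatticePreserving {k M N : Type*} [TropSemifield k] [TropSemigroup M] [TropModule k M]
    [TropSemigroup N] [TropModule k N] (α : TropHom k M N) : Prop :=
  ∀ v w : M, ∀ x : N, tle x (α.toFun v) → tle x (α.toFun w) →
    ∃ y : M, tle y v ∧ tle y w ∧ tle x (α.toFun y)

/-- The inclusion of the subset `N` into the ambient module is lattice-preserving. -/
def LatPresSet {M : Type*} [Add M] (N : Set M) : Prop :=
  ∀ v ∈ N, ∀ w ∈ N, ∀ x : M, tle x v → tle x w → ∃ y ∈ N, tle y v ∧ tle y w ∧ tle x y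

/-- `η` is the dual element of `e`: `⟨e,η⟩ = 0` and
`⟨v,η⟩ ⊙ ⟨e,ξ⟩ ≤ ⟨v,ξ⟩` for all `v`, `ξ`. -/
def IsDualElement {k M : Type*} [TropSemifield k] [TropSemigroup M] [TropModule k M]
    (e : M) (η : TropHom k M k) : Prop :=
  η.toFun e = 1 ∧ ∀ (v : M) (ξ : TropHom k M k), tle (η.toFun v * ξ.toFun e) (ξ.toFun v)

/-! ## Locators -/

/-- A locator of `M`: a lower-saturated subsemigroup of `(M, ⊕)` that generates `M`. -/
structure IsLocator (k : Type*) {M : Type*} [TropSemifield k] [TropSemigroup M] [TropModule k M]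
    (S : Set M) : Prop where
  lower : ∀ v w : M, tle v w → w ∈ S → v ∈ S
  add_mem : ∀ v ∈ S, ∀ w ∈ S, v + w ∈ S
  generates : TGenerates k S

/-- The multiplicative inverse `⊘a` (junk value `−∞` at `−∞`). -/
noncomputable def tinv {k : Type*} [TropSemifield k] (a : k) : k := by
  classical exact if h : a = 0 then 0 else Classical.choose (TropSemifield.exists_inv a h)

/-- Scalar multiplication on locators: `a ⊙̌ S = (⊘a) ⊙ S` for `a ≠ −∞`, `(−∞) ⊙̌ S = M`. -/
noncomputable def locSMul {k M : Type*} [TropSemifield k] [TropSemigroup M] [TropModule k M]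
    (a : k) (S : Set M) : Set M := by
  classical exact if a = 0 then Set.univ else (fun v => tinv a • v) '' S

/-- `U` is the infimum of the locators `S`, `T` in `Loc(M)` (whose canonical
order is reverse inclusion, the sum being intersection). -/
def IsLocInf (k : Type*) {M : Type*} [TropSemifield k] [TropSemigroup M] [TropModule k M]
    (S T U : Set M) : Prop :=
  IsLocator k U ∧ S ⊆ U ∧ T ⊆ U ∧
    ∀ W : Set M, IsLocator k W → S ⊆ W → T ⊆ W → U ⊆ W

/-! ## Submodules -/

/-- A subset of a `k`-module which is a submodule. -/
structure IsTSubmodule (k : Type*) {M : Type*} [TropSemifield k] [TropSemigroup M]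
    [TropModule k M] (N : Set M) : Prop where
  zero_mem : (0 : M) ∈ N
  add_mem : ∀ v ∈ N, ∀ w ∈ N, v + w ∈ N
  smul_mem : ∀ (a : k), ∀ v ∈ N, a • v ∈ N

/-- A bundled submodule of a `k`-module. -/
structure TSub (k : Type*) (M : Type*) [TropSemifield k] [TropSemigroup M] [TropModule k M] where
  carrier : Set M
  zero_mem : (0 : M) ∈ carrier
  add_mem : ∀ v ∈ carrier, ∀ w ∈ carrier, v + w ∈ carrier
  smul_mem : ∀ (a : k), ∀ v ∈ carrier, a • v ∈ carrier

instance TSub.instZero {k M : Type*} [TropSemifield k] [TropSemigroup M] [TropModule k M]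
    (N : TSub k M) : Zero ↥N.carrier :=
  ⟨⟨0, N.zero_mem⟩⟩

instance TSub.instAdd {k M : Type*} [TropSemifield k] [TropSemigroup M] [TropModule k M]
    (N : TSub k M) : Add ↥N.carrier :=
  ⟨fun v w => ⟨v.1 + w.1, N.add_mem v.1 v.2 w.1 w.2⟩⟩

instance TSub.instSMul {k M : Type*} [TropSemifield k] [TropSemigroup M] [TropModule k M]
    (N : TSub k M) : SMul k ↥N.carrier :=
  ⟨fun a v => ⟨a • v.1, N.smul_mem a v.1 v.2⟩⟩

instance TSub.semigroup {k M : Type*} [TropSemifield k] [TropSemigroup M] [TropModule k M]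
    (N : TSub k M) : TropSemigroup ↥N.carrier where
  add := (· + ·)
  zero := 0
  add_assoc a b c := Subtype.ext (add_assoc a.1 b.1 c.1)
  zero_add a := Subtype.ext (zero_add a.1)
  add_zero a := Subtype.ext (add_zero a.1)
  add_comm a b := Subtype.ext (add_comm a.1 b.1)
  nsmul := nsmulRec
  add_idem a := Subtype.ext (TropSemigroup.add_idem a.1)

instance TSub.module {k M : Type*} [TropSemifield k] [TropSemigroup M] [TropModule k M]
    (N : TSub k M) : TropModule k ↥N.carrier where
  smul := (· • ·)
  mul_smul a b v := Subtype.ext (TropModule.mul_smul a b v.1)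
  one_smul v := Subtype.ext (TropModule.one_smul v.1)
  add_smul a b v := Subtype.ext (TropModule.add_smul a b v.1)
  smul_add a v w := Subtype.ext (TropModule.smul_add a v.1 w.1)
  zero_smul v := Subtype.ext (TropModule.zero_smul v.1)
  smul_zero a := Subtype.ext (TropModule.smul_zero (M := M) a)

/-! ## Linear combinations -/

theorem tsmul_sum {k M : Type*} [TropSemifield k] [TropSemigroup M] [TropModule k M]
    (a : k) {ι : Type*} (s : Finset ι) (f : ι → M) :
    a • (∑ i ∈ s, f i) = ∑ i ∈ s, a • f i := by
  classical
  induction s using Finset.induction_on with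
  | empty => simpa using TropModule.smul_zero (M := M) a
  | insert _ _ h ih => rw [Finset.sum_insert h, Finset.sum_insert h, TropModule.smul_add, ih]

/-- The homomorphism `kⁿ → M` sending the `i`-th standard basis element to `e i`. -/
def linComb {k M : Type*} [TropSemifield k] [TropSemigroup M] [TropModule k M] {n : ℕ}
    (e : Fin n → M) : TropHom k (Fin n → k) M where
  toFun v := ∑ i, v i • e i
  map_zero' :=
    (Finset.sum_congr rfl fun i _ => TropModule.zero_smul (e i)).trans Finset.sum_const_zero
  map_add' v w := by
    rw [← Finset.sum_add_distrib]
    exact Finset.sum_congr rfl fun i _ => TropModule.add_smul (v i) (w i) (e i)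
  map_smul' a v := by
    rw [tsmul_sum]
    exact Finset.sum_congr rfl fun i _ => TropModule.mul_smul a (v i) (e i)

/-- The homomorphism `M → kⁿ` induced by an `n`-tuple of elements of `M∨`. -/
def dualTuple {k M : Type*} [TropSemifield k] [TropSemigroup M] [TropModule k M] {n : ℕ}
    (η : Fin n → TropHom k M k) : TropHom k M (Fin n → k) where
  toFun v := fun i => (η i).toFun v
  map_zero' := funext fun i => (η i).map_zero'
  map_add' v w := funext fun i => (η i).map_add' v w
  map_smul' a v := funext fun i => (η i).map_smul' a v

/-! ## The tropical semifield of real numbers -/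

/-- The tropical semifield of real numbers `ℝT = ℝ ∪ {−∞}`,
with `⊕ = max`, `⊙ = +`, zero element `−∞` and unity `0`. -/
def RT : Type := WithBot ℝ

namespace RT

/-- Tropical addition `⊕` on `ℝT`: the maximum. -/
noncomputable def tadd (a b : RT) : RT := @max (WithBot ℝ) _ a b

/-- Tropical multiplication `⊙` on `ℝT`: ordinary addition. -/
def tmul (a b : RT) : RT := @HAdd.hAdd (WithBot ℝ) (WithBot ℝ) (WithBot ℝ) _ a b

/-- The zero element `−∞` of `ℝT`. -/
def tzero : RT := @Bot.bot (WithBot ℝ) _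

/-- The unity `0` of `ℝT`. -/
def tone : RT := ((0 : ℝ) : WithBot ℝ)

noncomputable def tnsmul : ℕ → RT → RT
  | 0, _ => tzero
  | n + 1, a => tadd (tnsmul n a) a

noncomputable def tnpow : ℕ → RT → RT
  | 0, _ => tone
  | n + 1, a => tmul (tnpow n a) a

noncomputable def tnatCast : ℕ → RT
  | 0 => tzero
  | n + 1 => tadd (tnatCast n) tone

theorem wb_zero_add (a : WithBot ℝ) : ((0 : ℝ) : WithBot ℝ) + a = a := by
  rw [WithBot.coe_zero, zero_add]

theorem wb_add_zero (a : WithBot ℝ) : a + ((0 : ℝ) : WithBot ℝ) = a := by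
  rw [WithBot.coe_zero, add_zero]

theorem wb_left_distrib (a b c : WithBot ℝ) : a + max b c = max (a + b) (a + c) := by
  have h : Monotone (fun x : WithBot ℝ => a + x) := fun x y hxy => add_le_add_right hxy _
  exact h.map_max

theorem wb_right_distrib (a b c : WithBot ℝ) : max a b + c = max (a + c) (b + c) := by
  have h : Monotone (fun x : WithBot ℝ => x + c) := fun x y hxy => add_le_add_left hxy _
  exact h.map_max

theorem wb_exists_inv (a : WithBot ℝ) (h : a ≠ ⊥) :
    ∃ b : WithBot ℝ, a + b = ((0 : ℝ) : WithBot ℝ) := by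
  obtain ⟨x, rfl⟩ := WithBot.ne_bot_iff_exists.mp h
  exact ⟨((-x : ℝ) : WithBot ℝ), by rw [← WithBot.coe_add, add_neg_cancel]⟩

noncomputable instance instTropSemifield : TropSemifield RT where
  add := tadd
  zero := tzero
  mul := tmul
  one := tone
  add_assoc a b c := @max_assoc (WithBot ℝ) _ a b c
  add_comm a b := @max_comm (WithBot ℝ) _ a b
  zero_add a := max_eq_right (@bot_le (WithBot ℝ) _ _ a)
  add_zero a := max_eq_left (@bot_le (WithBot ℝ) _ _ a)
  nsmul := tnsmul
  nsmul_zero a := rfl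
  nsmul_succ n a := rfl
  mul_assoc a b c := @add_assoc (WithBot ℝ) _ a b c
  mul_comm a b := @add_comm (WithBot ℝ) _ a b
  one_mul a := wb_zero_add a
  mul_one a := wb_add_zero a
  zero_mul a := @WithBot.bot_add ℝ _ a
  mul_zero a := @WithBot.add_bot ℝ _ a
  left_distrib := wb_left_distrib
  right_distrib := wb_right_distrib
  npow := tnpow
  npow_zero a := rfl
  npow_succ n a := rfl
  natCast := tnatCast
  natCast_zero := rfl
  natCast_succ n := rfl
  add_idem a := @max_self (WithBot ℝ) _ a
  exists_inv a h := wb_exists_inv a h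

end RT

/-- The canonical inclusion `ℝ → ℝT`. -/
def rc (x : ℝ) : RT := (x : WithBot ℝ)

theorem RT.rc_mul (x y : ℝ) : rc x * rc y = rc (x + y) := (WithBot.coe_add x y).symm

theorem RT.rc_zero : rc 0 = (1 : RT) := rfl

/-! ## Tropical projective space -/

theorem RT.cons_ne_zero {n : ℕ} (v : Fin n → ℝ) :
    (Fin.cons (rc 0) (fun i => rc (v i)) : Fin (n + 1) → RT) ≠ 0 := by
  intro h
  have h0 := congrFun h 0
  rw [Fin.cons_zero] at h0
  exact WithBot.coe_ne_bot h0

/-- Two nonzero vectors of `ℝT^{n+1}` are projectively equivalent if they differ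
by the scalar action of `ℝ`. -/
def projSetoid (n : ℕ) : Setoid {v : Fin (n + 1) → RT // v ≠ 0} where
  r v w := ∃ c : ℝ, w.1 = rc c • v.1
  iseqv := by
    constructor
    · intro v
      exact ⟨0, (TropModule.one_smul v.1).symm⟩
    · rintro v w ⟨c, hc⟩
      refine ⟨-c, ?_⟩
      rw [hc, ← TropModule.mul_smul, RT.rc_mul, neg_add_cancel, RT.rc_zero,
        TropModule.one_smul]
    · rintro u v w ⟨c, hc⟩ ⟨d, hd⟩
      refine ⟨d + c, ?_⟩
      rw [hd, hc, ← TropModule.mul_smul, RT.rc_mul]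

/-- The tropical projective space `ℝT P^n`. -/
def TP (n : ℕ) : Type := Quotient (projSetoid n)

/-- The canonical projection `φ : ℝT^{n+1} ∖ {−∞} → ℝT P^n`. -/
def tphi {n : ℕ} (v : Fin (n + 1) → RT) (h : v ≠ 0) : TP n :=
  Quotient.mk (projSetoid n) ⟨v, h⟩

/-- The subset `M = φ⁻¹(P) ∪ {−∞}` of `ℝT^{n+1}` corresponding to `P ⊆ ℝT P^n`. -/
def Mof {n : ℕ} (P : Set (TP n)) : Set (Fin (n + 1) → RT) :=
  {v | ∃ h : v ≠ 0, tphi v h ∈ P} ∪ {0}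

/-- A subset of `ℝT P^n` is tropically convex if the corresponding subset of
`ℝT^{n+1}` is a submodule. -/
def TropConvexP {n : ℕ} (Q : Set (TP n)) : Prop :=
  IsTSubmodule RT (Mof Q)

/-- The tropically convex hull. -/
def tchull {n : ℕ} (A : Set (TP n)) : Set (TP n) :=
  ⋂₀ {Q : Set (TP n) | TropConvexP Q ∧ A ⊆ Q}

/-- The embedding `ℝ^n → ℝT P^n`, `(a₁, …, aₙ) ↦ φ(0, a₁, …, aₙ)`. -/
def embR {n : ℕ} (v : Fin n → ℝ) : TP n :=
  tphi (Fin.cons (rc 0) fun i => rc (v i)) (RT.cons_ne_zero v)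

/-- A (tropical) polytope in `ℝT P^n`: the tropically convex hull of finitely
many points of `ℝ^n`. -/
def IsTropPolytope {n : ℕ} (P : Set (TP n)) : Prop :=
  ∃ S : Finset (TP n), (∀ x ∈ S, ∃ v : Fin n → ℝ, x = embR v) ∧ P = tchull ↑S

/-- A polytrope: a polytope that is convex as a subset of `ℝ^n` in the ordinary sense. -/
def IsPolytrope {n : ℕ} (P : Set (TP n)) : Prop :=
  IsTropPolytope P ∧ P ⊆ Set.range embR ∧ Convex ℝ (embR ⁻¹' P)

/-! ### Auxiliary development for Statement 6 -/

namespace S6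

/-- Ambient tropical module `ℝT^{n+1}`. -/
abbrev V (n : ℕ) := Fin (n + 1) → RT

/-- The identity map `ℝT → WithBot ℝ` making the order available. -/
def wb (a : RT) : WithBot ℝ := a

theorem wb_inj {a b : RT} (h : wb a = wb b) : a = b := h

theorem RT.add_def (a b : RT) : wb (a + b) = max (wb a) (wb b) := rfl
theorem RT.mul_def (a b : RT) : wb (a * b) = wb a + wb b := rfl
theorem RT.zero_def : wb (0 : RT) = (⊥ : WithBot ℝ) := rfl
theorem RT.one_def : wb (1 : RT) = ((0:ℝ) : WithBot ℝ) := rfl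
theorem RT.rc_def (x : ℝ) : wb (rc x) = (x : WithBot ℝ) := rfl

/-- `tle` on `RT` is the `WithBot ℝ` order. -/
theorem RT.tle_iff (a b : RT) : tle a b ↔ wb a ≤ wb b := by
  constructor
  · intro h
    have : wb (a + b) = wb b := by rw [h]
    rw [RT.add_def, max_eq_right_iff] at this
    exact this
  · intro h
    apply wb_inj
    rw [RT.add_def]
    exact max_eq_right h

theorem smul_apply {n : ℕ} (a : RT) (x : V n) (l : Fin (n+1)) :
    (a • x) l = a * x l := rfl

theorem add_apply {n : ℕ} (x y : V n) (l : Fin (n+1)) : (x + y) l = x l + y l := rfl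

theorem zero_apply {n : ℕ} (l : Fin (n+1)) : (0 : V n) l = 0 := rfl

/-- `tle` on `V n` is the pointwise `WithBot ℝ` order. -/
theorem tle_iff {n : ℕ} (x y : V n) : tle x y ↔ ∀ l, wb (x l) ≤ wb (y l) := by
  constructor
  · intro h l
    have : wb ((x + y) l) = wb (y l) := by rw [h]
    rw [add_apply, RT.add_def, max_eq_right_iff] at this
    exact this
  · intro h
    funext l
    apply wb_inj
    rw [add_apply, RT.add_def]
    exact max_eq_right (h l)

end S6
namespace S6

theorem sum_apply {n : ℕ} {ι : Type*} (s : Finset ι) (f : ι → V n) (l : Fin (n+1)) :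
    (∑ m ∈ s, f m) l = ∑ m ∈ s, f m l := by
  classical
  induction s using Finset.induction_on with
  | empty => rfl
  | insert _ _ h ih => rw [Finset.sum_insert h, Finset.sum_insert h, add_apply, ih]

theorem le_tsum {ι : Type*} {s : Finset ι} {f : ι → RT} {m : ι} (hm : m ∈ s) :
    wb (f m) ≤ wb (∑ k ∈ s, f k) := by
  classical
  induction s using Finset.induction_on with
  | empty => exact absurd hm (Finset.notMem_empty m)
  | @insert a t h ih =>
    rw [Finset.sum_insert h, RT.add_def]
    rcases Finset.mem_insert.mp hm with h1 | h2
    · subst h1; exact le_max_left _ _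
    · exact le_trans (ih h2) (le_max_right _ _)

theorem tsum_le {ι : Type*} {s : Finset ι} {f : ι → RT} {c : RT}
    (h : ∀ m ∈ s, wb (f m) ≤ wb c) : wb (∑ k ∈ s, f k) ≤ wb c := by
  classical
  induction s using Finset.induction_on with
  | empty => exact bot_le
  | @insert a t hns ih =>
    rw [Finset.sum_insert hns, RT.add_def]
    exact max_le (h a (Finset.mem_insert_self a t))
      (ih fun m hm => h m (Finset.mem_insert_of_mem hm))

/-- If a sum equals `c` then some term "attains" it whenever... (existence of a term
not strictly below any value exceeding all terms is false in general; instead:)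
A sum is `⊥` iff all terms are. -/
theorem tsum_eq_zero_iff {ι : Type*} {s : Finset ι} {f : ι → RT} :
    (∑ k ∈ s, f k) = 0 ↔ ∀ m ∈ s, f m = 0 := by
  classical
  constructor
  · intro h m hm
    apply wb_inj
    rw [RT.zero_def]
    rw [le_bot_iff.symm]
    calc wb (f m) ≤ wb (∑ k ∈ s, f k) := le_tsum hm
    _ = ⊥ := by rw [h]; rfl
  · intro h
    induction s using Finset.induction_on with
    | empty => rfl
    | @insert a t hns ih =>
      rw [Finset.sum_insert hns, h a (Finset.mem_insert_self a t),
        ih (fun m hm => h m (Finset.mem_insert_of_mem hm)), add_zero]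

end S6
namespace S6

/-- The set of tropical linear combinations of `G 0, …, G (r-1)`. -/
def spanF {n r : ℕ} (G : Fin r → V n) : Set (V n) :=
  {x | ∃ c : Fin r → RT, x = ∑ m, c m • G m}

theorem zero_smul' {n : ℕ} (x : V n) : (0 : RT) • x = 0 := TropModule.zero_smul x
theorem one_smul' {n : ℕ} (x : V n) : (1 : RT) • x = x := TropModule.one_smul x

theorem spanF_zero_mem {n r : ℕ} (G : Fin r → V n) : (0 : V n) ∈ spanF G := by
  refine ⟨fun _ => 0, ?_⟩
  rw [Finset.sum_congr rfl fun m _ => zero_smul' (G m)]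
  exact (Finset.sum_const_zero).symm

theorem spanF_mem_self {n r : ℕ} (G : Fin r → V n) (i : Fin r) : G i ∈ spanF G := by
  classical
  refine ⟨fun m => if m = i then 1 else 0, ?_⟩
  rw [Finset.sum_eq_single_of_mem i (Finset.mem_univ i)]
  · show G i = (if i = i then (1:RT) else 0) • G i
    rw [if_pos rfl, one_smul']
  · intro b _ hb
    show (if b = i then (1:RT) else 0) • G b = 0
    rw [if_neg hb, zero_smul']

theorem spanF_add_mem {n r : ℕ} {G : Fin r → V n} {x y : V n}
    (hx : x ∈ spanF G) (hy : y ∈ spanF G) : x + y ∈ spanF G := by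
  obtain ⟨a, rfl⟩ := hx
  obtain ⟨b, rfl⟩ := hy
  refine ⟨fun m => a m + b m, ?_⟩
  rw [← Finset.sum_add_distrib]
  exact Finset.sum_congr rfl fun m _ => (TropModule.add_smul (a m) (b m) (G m)).symm

theorem spanF_smul_mem {n r : ℕ} {G : Fin r → V n} (c : RT) {x : V n}
    (hx : x ∈ spanF G) : c • x ∈ spanF G := by
  obtain ⟨a, rfl⟩ := hx
  refine ⟨fun m => c * a m, ?_⟩
  rw [tsmul_sum]
  exact Finset.sum_congr rfl fun m _ => (TropModule.mul_smul c (a m) (G m)).symm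

theorem sum_smul' {n : ℕ} {ι : Type*} (s : Finset ι) (a : ι → RT) (x : V n) :
    (∑ m ∈ s, a m) • x = ∑ m ∈ s, a m • x := by
  classical
  induction s using Finset.induction_on with
  | empty => exact zero_smul' x
  | @insert i t hi ih =>
    rw [Finset.sum_insert hi, Finset.sum_insert hi, TropModule.add_smul, ih]

theorem spanF_sum_mem {n r : ℕ} {G : Fin r → V n} {ι : Type*} {s : Finset ι} {f : ι → V n}
    (hf : ∀ m ∈ s, f m ∈ spanF G) : (∑ m ∈ s, f m) ∈ spanF G := by
  classical
  induction s using Finset.induction_on with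
  | empty => exact spanF_zero_mem G
  | @insert i t hi ih =>
    rw [Finset.sum_insert hi]
    exact spanF_add_mem (hf i (Finset.mem_insert_self i t))
      (ih fun m hm => hf m (Finset.mem_insert_of_mem hm))

theorem spanF_subset {n r r' : ℕ} {G : Fin r → V n} {H : Fin r' → V n}
    (h : ∀ m, H m ∈ spanF G) : spanF H ⊆ spanF G := by
  rintro x ⟨c, rfl⟩
  exact spanF_sum_mem fun m _ => spanF_smul_mem (c m) (h m)

end S6
namespace S6

/-- A vector of `ℝT^{n+1}` with no `−∞` coordinate. -/
def IsReal {n : ℕ} (x : V n) : Prop := ∀ l, wb (x l) ≠ ⊥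

theorem isReal_rc {n : ℕ} (f : Fin (n+1) → ℝ) : IsReal (fun l => rc (f l)) :=
  fun l => WithBot.coe_ne_bot

theorem IsReal.ne_zero {n : ℕ} {x : V n} (h : IsReal x) : x ≠ 0 := by
  intro h0
  exact h 0 (by rw [h0]; rfl)

theorem IsReal.exists_rep {n : ℕ} {x : V n} (h : IsReal x) :
    ∃ f : Fin (n+1) → ℝ, x = fun l => rc (f l) := by
  refine ⟨fun l => (wb (x l)).unbot (h l), ?_⟩
  funext l
  apply wb_inj
  rw [RT.rc_def, WithBot.coe_unbot]

theorem ne_bot_of_le {a b : WithBot ℝ} (ha : a ≠ ⊥) (h : a ≤ b) : b ≠ ⊥ := by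
  intro hb
  exact ha (le_bot_iff.mp (hb ▸ h))

theorem spanF_real {n r : ℕ} {T : Fin r → V n} (hT : ∀ m, IsReal (T m)) {x : V n}
    (hx : x ∈ spanF T) (hx0 : x ≠ 0) : IsReal x := by
  obtain ⟨c, rfl⟩ := hx
  have : ∃ m, c m ≠ 0 := by
    by_contra hc
    push_neg at hc
    exact hx0 (by
      funext l
      rw [sum_apply]
      have : ∀ m ∈ Finset.univ, (c m • T m) l = 0 := fun m _ => by
        rw [smul_apply, hc m]
        apply wb_inj
        rw [RT.mul_def, RT.zero_def]
        exact WithBot.bot_add _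
      exact (tsum_eq_zero_iff.mpr this))
  obtain ⟨m0, hm0⟩ := this
  intro l
  have h1 : wb ((c m0 • T m0) l) ≠ ⊥ := by
    rw [smul_apply, RT.mul_def]
    exact WithBot.add_ne_bot.mpr ⟨hm0, hT m0 l⟩
  have h2 : wb ((c m0 • T m0) l) ≤ wb ((∑ m, c m • T m) l) := by
    rw [sum_apply]
    exact le_tsum (f := fun m => (c m • T m) l) (Finset.mem_univ m0)
  exact ne_bot_of_le h1 h2

theorem spanF_drop {n r : ℕ} (G : Fin (r+1) → V n) (k : Fin (r+1))
    (hk : G k ∈ spanF (G ∘ k.succAbove)) : spanF G = spanF (G ∘ k.succAbove) := by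
  apply le_antisymm
  · apply spanF_subset
    intro m
    rcases eq_or_ne m k with rfl | hm
    · exact hk
    · obtain ⟨m', hm'⟩ := Fin.exists_succAbove_eq hm
      rw [← hm']
      exact spanF_mem_self (G ∘ k.succAbove) m'
  · exact spanF_subset fun m => spanF_mem_self G (k.succAbove m)

end S6
namespace S6

theorem subtle_iff {n : ℕ} {N : TSub RT (V n)} (a b : ↥N.carrier) :
    tle a b ↔ tle a.1 b.1 := by
  constructor
  · intro h
    have := congrArg Subtype.val h
    exact this
  · intro h
    exact Subtype.ext h

theorem tle_refl {n : ℕ} (x : V n) : tle x x := (tle_iff x x).mpr fun l => le_refl _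

theorem tle_antisymm {n : ℕ} {x y : V n} (h1 : tle x y) (h2 : tle y x) : x = y := by
  rw [tle_iff] at h1 h2
  funext l
  exact wb_inj (le_antisymm (h1 l) (h2 l))

theorem tle_trans {n : ℕ} {x y z : V n} (h1 : tle x y) (h2 : tle y z) : tle x z := by
  rw [tle_iff] at *
  exact fun l => le_trans (h1 l) (h2 l)

/-- Join-primeness of extremal elements, from straightness. -/
theorem prime_of_straight {n : ℕ} (N : TSub RT (V n)) (hs : Straight ↥N.carrier)
    {g x y : V n} (hg : g ∈ N.carrier) (hx : x ∈ N.carrier) (hy : y ∈ N.carrier)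
    (hext : ∀ u ∈ N.carrier, ∀ v ∈ N.carrier, u + v = g → u = g ∨ v = g)
    (hle : tle g (x + y)) : tle g x ∨ tle g y := by
  set G : ↥N.carrier := ⟨g, hg⟩ with hG
  set X : ↥N.carrier := ⟨x, hx⟩ with hX
  set Y : ↥N.carrier := ⟨y, hy⟩ with hY
  obtain ⟨Z1, hZ1⟩ := hs.1 X G
  obtain ⟨Z2, hZ2⟩ := hs.1 Y G
  have hd : IsTInf (X + Y) G (Z1 + Z2) := hs.2 X Y G Z1 Z2 hZ1 hZ2
  have hXY : (X + Y).1 = x + y := rfl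
  have hGinf : IsTInf (X + Y) G G := by
    refine ⟨?_, ?_, fun u h1 h2 => h2⟩
    · rw [subtle_iff]
      exact hle
    · rw [subtle_iff]
      exact tle_refl g
  have huniq : Z1 + Z2 = G := by
    have h1 : tle (Z1 + Z2) G := hd.2.1
    have h2 : tle G (Z1 + Z2) := hd.2.2 G hGinf.1 hGinf.2.1
    rw [subtle_iff] at h1 h2
    exact Subtype.ext (tle_antisymm h1 h2)
  have hval : Z1.1 + Z2.1 = g := congrArg Subtype.val huniq
  rcases hext Z1.1 Z1.2 Z2.1 Z2.2 hval with h | h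
  · left
    have := hZ1.1
    rw [subtle_iff] at this
    rw [← h]
    exact this
  · right
    have := hZ2.1
    rw [subtle_iff] at this
    rw [← h]
    exact this

end S6
namespace S6

theorem smul_tle {n : ℕ} (a : RT) {x y : V n} (h : tle x y) : tle (a • x) (a • y) := by
  rw [tle_iff] at h ⊢
  intro l
  rw [smul_apply, smul_apply, RT.mul_def, RT.mul_def]
  exact add_le_add_right (h l) _

theorem rc_cancel {n : ℕ} (t : ℝ) (x : V n) : rc (-t) • rc t • x = x := by
  rw [← TropModule.mul_smul, RT.rc_mul, neg_add_cancel, RT.rc_zero, one_smul']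

theorem N_sum_mem {n : ℕ} (N : TSub RT (V n)) {ι : Type*} {s : Finset ι} {f : ι → V n}
    (h : ∀ m ∈ s, f m ∈ N.carrier) : (∑ m ∈ s, f m) ∈ N.carrier := by
  classical
  induction s using Finset.induction_on with
  | empty => exact N.zero_mem
  | @insert a u ha ih =>
    rw [Finset.sum_insert ha]
    exact N.add_mem _ (h a (Finset.mem_insert_self a u)) _
      (ih fun m hm => h m (Finset.mem_insert_of_mem hm))

theorem prime_smul {n : ℕ} (N : TSub RT (V n)) (hs : Straight ↥N.carrier)
    {g : V n} (hg : g ∈ N.carrier)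
    (hext : ∀ u ∈ N.carrier, ∀ v ∈ N.carrier, u + v = g → u = g ∨ v = g)
    (t : ℝ) {x y : V n} (hx : x ∈ N.carrier) (hy : y ∈ N.carrier)
    (hle : tle (rc t • g) (x + y)) : tle (rc t • g) x ∨ tle (rc t • g) y := by
  have h1 : tle g (rc (-t) • x + rc (-t) • y) := by
    have := smul_tle (rc (-t)) hle
    rw [rc_cancel, TropModule.smul_add] at this
    exact this
  rcases prime_of_straight N hs hg (N.smul_mem _ _ hx) (N.smul_mem _ _ hy) hext h1 with h | h
  · left
    have := smul_tle (rc t) h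
    rw [← TropModule.mul_smul, RT.rc_mul, add_neg_cancel, RT.rc_zero, one_smul'] at this
    exact this
  · right
    have := smul_tle (rc t) h
    rw [← TropModule.mul_smul, RT.rc_mul, add_neg_cancel, RT.rc_zero, one_smul'] at this
    exact this

theorem prime_sum {n : ℕ} (N : TSub RT (V n)) (hs : Straight ↥N.carrier)
    {g : V n} (hg : g ∈ N.carrier) (hgr : IsReal g)
    (hext : ∀ u ∈ N.carrier, ∀ v ∈ N.carrier, u + v = g → u = g ∨ v = g)
    (t : ℝ) {ι : Type*} {s : Finset ι} {f : ι → V n} (hf : ∀ m ∈ s, f m ∈ N.carrier)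
    (hle : tle (rc t • g) (∑ m ∈ s, f m)) : ∃ m ∈ s, tle (rc t • g) (f m) := by
  classical
  induction s using Finset.induction_on with
  | empty =>
    exfalso
    rw [tle_iff] at hle
    have := hle 0
    rw [smul_apply, RT.mul_def] at this
    have hne : wb (rc t) + wb (g 0) ≠ ⊥ := WithBot.add_ne_bot.mpr ⟨WithBot.coe_ne_bot, hgr 0⟩
    exact hne (le_bot_iff.mp this)
  | @insert a u ha ih =>
    rw [Finset.sum_insert ha] at hle
    rcases prime_smul N hs hg hext t (hf a (Finset.mem_insert_self a u))
      (N_sum_mem N fun m hm => hf m (Finset.mem_insert_of_mem hm)) hle with h | h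
    · exact ⟨a, Finset.mem_insert_self a u, h⟩
    · obtain ⟨m, hm, hm2⟩ := ih (fun m hm => hf m (Finset.mem_insert_of_mem hm)) h
      exact ⟨m, Finset.mem_insert_of_mem hm, hm2⟩

end S6
namespace S6

theorem tle_add_left {n : ℕ} (x y : V n) : tle x (x + y) := by
  rw [tle_iff]
  intro l
  rw [add_apply, RT.add_def]
  exact le_max_left _ _

theorem tle_add_right {n : ℕ} (x y : V n) : tle y (x + y) := by
  rw [tle_iff]
  intro l
  rw [add_apply, RT.add_def]
  exact le_max_right _ _

theorem le_zero_of_add_coe_le {a : WithBot ℝ} {w : ℝ}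
    (h : a + (w : WithBot ℝ) ≤ (w : WithBot ℝ)) : a ≤ ((0:ℝ) : WithBot ℝ) := by
  cases a with
  | bot => exact bot_le
  | coe u =>
    rw [← WithBot.coe_add, WithBot.coe_le_coe] at h
    exact WithBot.coe_le_coe.mpr (by linarith)

theorem add_coe_lt {a : WithBot ℝ} {w : ℝ} (h : a < ((0:ℝ) : WithBot ℝ)) :
    a + (w : WithBot ℝ) < (w : WithBot ℝ) := by
  cases a with
  | bot => rw [WithBot.bot_add]; exact WithBot.bot_lt_coe w
  | coe u =>
    rw [← WithBot.coe_add, WithBot.coe_lt_coe]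
    rw [WithBot.coe_lt_coe] at h
    linarith

theorem max_right_of_lt {a b c : WithBot ℝ} (h : max a b = c) (ha : a < c) : b = c := by
  rcases max_cases a b with ⟨h1, _⟩ | ⟨h1, _⟩
  · exact absurd (h1 ▸ h) (ne_of_lt ha)
  · exact h1 ▸ h

/-- Members of a minimal generating family are extremal. -/
theorem extremal_of_minimal {n r : ℕ} (G : Fin (r+1) → V n) (hreal : ∀ i, IsReal (G i))
    (hmin : ∀ H : Fin r → V n, spanF H ≠ spanF G)
    (i : Fin (r+1)) {u v : V n} (hu : u ∈ spanF G) (hv : v ∈ spanF G)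
    (huv : u + v = G i) : u = G i ∨ v = G i := by
  classical
  obtain ⟨a, rfl⟩ := hu
  obtain ⟨b, rfl⟩ := hv
  set c : Fin (r+1) → RT := fun m => a m + b m with hc
  have hGi : G i = ∑ m, c m • G m := by
    rw [← huv, ← Finset.sum_add_distrib]
    exact Finset.sum_congr rfl fun m _ => (TropModule.add_smul (a m) (b m) (G m)).symm
  have hterm : ∀ l, wb ((c i • G i) l) ≤ wb (G i l) := by
    intro l
    have h1 : wb ((c i • G i) l) ≤ wb ((∑ m, c m • G m) l) := by
      rw [sum_apply]
      exact le_tsum (f := fun m => (c m • G m) l) (Finset.mem_univ i)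
    rw [← hGi] at h1
    exact h1
  have hci_le : wb (c i) ≤ ((0:ℝ) : WithBot ℝ) := by
    obtain ⟨w0, hw0⟩ : ∃ w0 : ℝ, wb (G i 0) = (w0 : WithBot ℝ) := by
      have := hreal i 0
      cases hh : wb (G i 0) with
      | bot => exact absurd hh this
      | coe w => exact ⟨w, rfl⟩
    have := hterm 0
    rw [smul_apply, RT.mul_def, hw0] at this
    exact le_zero_of_add_coe_le this
  rcases eq_or_lt_of_le hci_le with hci | hci
  · -- `c i = 1`; then `a i = 1` or `b i = 1`, and the corresponding vector equals `G i`
    have hmax : max (wb (a i)) (wb (b i)) = ((0:ℝ) : WithBot ℝ) := by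
      rw [← RT.add_def]; exact hci
    have key : ∀ (d : Fin (r+1) → RT), wb (d i) = ((0:ℝ) : WithBot ℝ) →
        tle (∑ m, d m • G m) (G i) → (∑ m, d m • G m) = G i := by
      intro d hd hled
      apply tle_antisymm hled
      rw [tle_iff]
      intro l
      have h1 : wb ((d i • G i) l) ≤ wb ((∑ m, d m • G m) l) := by
        rw [sum_apply]
        exact le_tsum (f := fun m => (d m • G m) l) (Finset.mem_univ i)
      have h2 : wb ((d i • G i) l) = wb (G i l) := by
        rw [smul_apply, RT.mul_def, hd, ← RT.one_def, ← RT.mul_def, one_mul]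
      rw [← h2]
      exact h1
    rcases max_cases (wb (a i)) (wb (b i)) with ⟨h1, _⟩ | ⟨h1, _⟩
    · left
      refine key a (by rw [← h1, ← hmax]) ?_
      have := tle_add_left (∑ m, a m • G m) (∑ m, b m • G m)
      rw [huv] at this
      exact this
    · right
      refine key b (by rw [← h1, ← hmax]) ?_
      have := tle_add_right (∑ m, a m • G m) (∑ m, b m • G m)
      rw [huv] at this
      exact this
  · -- `c i < 1` : `G i` lies in the span of the other members; contradiction
    exfalso
    have hstrict : ∀ l, wb ((c i • G i) l) < wb (G i l) := by
      intro l
      obtain ⟨w, hw⟩ : ∃ w : ℝ, wb (G i l) = (w : WithBot ℝ) := by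
        have := hreal i l
        cases hh : wb (G i l) with
        | bot => exact absurd hh this
        | coe w => exact ⟨w, rfl⟩
      rw [smul_apply, RT.mul_def, hw]
      exact add_coe_lt hci
    have hsplit : G i = c i • G i + ∑ m, c (i.succAbove m) • G (i.succAbove m) := by
      conv_lhs => rw [hGi]
      exact Fin.sum_univ_succAbove (fun m => c m • G m) i
    have hrest : ∀ l, ((∑ m, c (i.succAbove m) • G (i.succAbove m)) l) = G i l := by
      intro l
      have h1 : wb (G i l) = max (wb ((c i • G i) l))
          (wb ((∑ m, c (i.succAbove m) • G (i.succAbove m)) l)) := by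
        conv_lhs => rw [hsplit]
        rw [add_apply, RT.add_def]
      exact wb_inj (max_right_of_lt h1.symm (hstrict l))
    apply hmin (G ∘ i.succAbove)
    apply (spanF_drop G i ?_).symm
    refine ⟨fun m => c (i.succAbove m), ?_⟩
    funext l
    exact (hrest l).symm
end S6
namespace S6

theorem tle_smul_rc_iff {n : ℕ} (t : ℝ) (f g : Fin (n+1) → ℝ) :
    tle (rc t • (fun l => rc (f l))) (fun l => rc (g l)) ↔ ∀ l, t + f l ≤ g l := by
  rw [tle_iff]
  apply forall_congr'
  intro l
  rw [smul_apply, RT.mul_def, RT.rc_def, RT.rc_def, RT.rc_def, ← WithBot.coe_add,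
    WithBot.coe_le_coe]

theorem tsum_rc {ι : Type*} (s : Finset ι) (hne : s.Nonempty) (u : ι → ℝ) :
    (∑ m ∈ s, rc (u m)) = rc (s.sup' hne u) := by
  classical
  induction hne using Finset.Nonempty.cons_induction with
  | singleton a => rw [Finset.sum_singleton, Finset.sup'_singleton]
  | cons a s ha hs ih =>
    rw [Finset.sum_cons, Finset.sup'_cons, ih]
    apply wb_inj
    rw [RT.add_def, RT.rc_def, RT.rc_def, RT.rc_def]
    exact (WithBot.coe_max _ _).symm

/-- Every member of a minimal generating family acts as a scaled coordinate
functional: there is a coordinate `j` simultaneously minimizing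
`fR m · − fR i ·` for all `m`. -/
theorem coord_exists {n r : ℕ} (N : TSub RT (V n)) (hs : Straight ↥N.carrier)
    (G : Fin r → V n) (hspan : spanF G = N.carrier)
    (fR : Fin r → Fin (n+1) → ℝ) (hfR : ∀ m, G m = fun l => rc (fR m l))
    (i : Fin r)
    (hext : ∀ u ∈ N.carrier, ∀ v ∈ N.carrier, u + v = G i → u = G i ∨ v = G i) :
    ∃ j : Fin (n+1), ∀ m l, fR m j - fR i j ≤ fR m l - fR i l := by
  classical
  have huniv : (Finset.univ : Finset (Fin (n+1))).Nonempty := Finset.univ_nonempty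
  have hruniv : (Finset.univ : Finset (Fin r)).Nonempty := ⟨i, Finset.mem_univ i⟩
  set B : Fin r → ℝ := fun m => Finset.univ.inf' huniv (fun l => fR m l - fR i l) with hB
  have hBi : B i = 0 := by
    rw [hB]
    simp only [sub_self]
    exact Finset.inf'_const huniv 0
  have hB_le : ∀ m l, B m ≤ fR m l - fR i l := fun m l =>
    Finset.inf'_le _ (Finset.mem_univ l)
  set w : V n := ∑ m, rc (-(B m)) • G m with hw
  have hwmem : w ∈ N.carrier := by
    rw [← hspan]
    exact spanF_sum_mem fun m _ => spanF_smul_mem _ (spanF_mem_self G m)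
  set wR : Fin (n+1) → ℝ := fun l => Finset.univ.sup' hruniv (fun m => fR m l - B m)
    with hwR
  have hwrep : w = fun l => rc (wR l) := by
    funext l
    rw [hw, sum_apply]
    have : ∀ m ∈ Finset.univ, (rc (-(B m)) • G m) l = rc (fR m l - B m) := by
      intro m _
      rw [smul_apply, hfR m]
      apply wb_inj
      rw [RT.mul_def, RT.rc_def, RT.rc_def, RT.rc_def, ← WithBot.coe_add,
        WithBot.coe_inj]
      ring
    rw [Finset.sum_congr rfl this, tsum_rc _ hruniv]
  have hwi : ∀ l, fR i l ≤ wR l := by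
    intro l
    have := Finset.le_sup' (fun m => fR m l - B m) (Finset.mem_univ i)
    rw [hBi, sub_zero] at this
    exact this
  -- there is a coordinate where `wR` equals `fR i`
  have hj : ∃ j, wR j ≤ fR i j := by
    by_contra hcon
    push_neg at hcon
    set t : ℝ := Finset.univ.inf' huniv (fun l => wR l - fR i l) with ht
    have htpos : 0 < t := by
      rw [ht, Finset.lt_inf'_iff]
      intro l _
      exact sub_pos.mpr (hcon l)
    have htle : tle (rc t • G i) w := by
      rw [hfR i, hwrep, tle_smul_rc_iff]
      intro l
      have := Finset.inf'_le (fun l => wR l - fR i l) (Finset.mem_univ l)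
      rw [← ht] at this
      linarith
    obtain ⟨m, _, hm⟩ := prime_sum N hs (hspan ▸ spanF_mem_self G i)
      (by rw [hfR i]; exact isReal_rc _) hext t
      (fun m _ => hspan ▸ spanF_smul_mem _ (spanF_mem_self G m)) (hw ▸ htle)
    -- `t•G i ≤ rc (−B m)•G m` forces `t ≤ 0`
    have : ∀ l, t + fR i l ≤ -(B m) + fR m l := by
      have h2 : rc (-(B m)) • G m = fun l => rc (-(B m) + fR m l) := by
        funext l
        rw [smul_apply, hfR m]
        apply wb_inj
        rw [RT.mul_def, RT.rc_def, RT.rc_def, RT.rc_def, ← WithBot.coe_add]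
      rw [hfR i, h2] at hm
      exact (tle_smul_rc_iff t _ _).mp hm
    have hlb : ∀ l ∈ (Finset.univ : Finset (Fin (n+1))), t + B m ≤ fR m l - fR i l := by
      intro l _
      have h4 := this l
      linarith
    have h5 : t + B m ≤ B m := Finset.le_inf' huniv _ hlb
    linarith
  obtain ⟨j, hjle⟩ := hj
  refine ⟨j, fun m l => ?_⟩
  have h1 : fR m j - B m ≤ wR j :=
    Finset.le_sup' (fun m => fR m j - B m) (Finset.mem_univ m)
  have h2 := hB_le m l
  have h3 := hjle
  -- fR m j - B m ≤ wR j ≤ fR i j  ⇒  fR m j - fR i j ≤ B m ≤ fR m l - fR i l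
  linarith

end S6
namespace S6

/-- Main combinatorial lemma: a straight finitely generated (by real vectors)
submodule of `ℝT^{n+1}` is generated by at most `n+1` real vectors. -/
theorem span_small {n : ℕ} (N : TSub RT (V n)) (hs : Straight ↥N.carrier)
    {r0 : ℕ} (T : Fin r0 → V n) (hT : ∀ m, IsReal (T m)) (hspanT : spanF T = N.carrier) :
    ∃ (r : ℕ) (G : Fin r → V n), r ≤ n + 1 ∧ (∀ i, IsReal (G i)) ∧
      spanF G = N.carrier := by
  classical
  let Q : ℕ → Prop := fun r => ∃ G : Fin r → V n, spanF G = N.carrier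
  have hQ : ∃ r, Q r := ⟨r0, T, hspanT⟩
  let r := Nat.find hQ
  obtain ⟨G, hG⟩ : Q r := Nat.find_spec hQ
  have hmin : ∀ r' < r, ¬ Q r' := fun r' h => Nat.find_min hQ h
  -- if `r = 0` we are done
  match hr : r, G, hG with
  | 0, G, hG => exact ⟨0, G, Nat.zero_le _, fun i => i.elim0, hG⟩
  | (r' + 1), G, hG =>
  have hmin' : ∀ H : Fin r' → V n, spanF H ≠ spanF G := by
    intro H hH
    exact hmin r' (by omega) ⟨H, hH.trans hG⟩
  -- each `G i` is nonzero, hence real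
  have hne : ∀ i, G i ≠ 0 := by
    intro i h0
    apply hmin' (G ∘ i.succAbove)
    exact (spanF_drop G i (h0 ▸ spanF_zero_mem _)).symm
  have hreal : ∀ i, IsReal (G i) := by
    intro i
    exact spanF_real hT (by rw [hspanT, ← hG]; exact spanF_mem_self G i) (hne i)
  -- real representatives
  have hrep := fun i => (hreal i).exists_rep
  choose fR hfR using hrep
  -- extremality
  have hext : ∀ i, ∀ u ∈ N.carrier, ∀ v ∈ N.carrier, u + v = G i → u = G i ∨ v = G i := by
    intro i u hu v hv huv
    exact extremal_of_minimal G hreal hmin' i (hG ▸ hu) (hG ▸ hv) huv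
  -- coordinates
  have hcoord := fun i => coord_exists N hs G hG fR hfR i (hext i)
  choose jmap hjmap using hcoord
  -- injectivity of `jmap`
  have hinj : Function.Injective jmap := by
    intro i k hik
    by_contra hik'
    have hik'' : i ≠ k := hik'
    set j := jmap k with hj
    have hik2 : jmap i = j := hik
    -- `G i = rc s • G k`
    have hkey : ∀ l, fR i l = (fR i j - fR k j) + fR k l := by
      intro l
      have h1 := hjmap k i l
      have h2 := hjmap i k l
      rw [hik2] at h2
      linarith
    have hGik : G i = rc (fR i j - fR k j) • G k := by
      rw [hfR i, hfR k]
      funext l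
      apply wb_inj
      rw [smul_apply, RT.mul_def, RT.rc_def, RT.rc_def, RT.rc_def, ← WithBot.coe_add,
        WithBot.coe_inj]
      exact hkey l
    apply hmin' (G ∘ i.succAbove)
    apply (spanF_drop G i ?_).symm
    rw [hGik]
    apply spanF_smul_mem
    obtain ⟨m', hm'⟩ := Fin.exists_succAbove_eq (Ne.symm hik'')
    rw [← hm']
    exact spanF_mem_self (G ∘ i.succAbove) m'
  have hcard : r' + 1 ≤ n + 1 := by
    have := Fintype.card_le_of_injective jmap hinj
    simpa using this
  exact ⟨r' + 1, G, hcard, hreal, hG⟩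

end S6
namespace S6

/-- The set of projective classes of the nonzero elements of `A`. -/
def classSet {n : ℕ} (A : Set (V n)) : Set (TP n) :=
  {q | ∃ (v : V n) (h : v ≠ 0), v ∈ A ∧ q = tphi v h}

theorem Mof_classSet {n : ℕ} {A : Set (V n)} (h0 : (0 : V n) ∈ A)
    (hsm : ∀ (c : ℝ) (v : V n), v ∈ A → rc c • v ∈ A) :
    Mof (classSet A) = A := by
  ext v
  constructor
  · rintro (⟨h, hq⟩ | h0')
    · obtain ⟨u, hu0, huA, hequ⟩ := hq
      have : projSetoid n |>.r ⟨v, h⟩ ⟨u, hu0⟩ := Quotient.eq.mp hequ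
      obtain ⟨c, hc⟩ := this
      have hc' : u = rc c • v := hc
      have : v = rc (-c) • u := by
        rw [hc', ← TropModule.mul_smul, RT.rc_mul, neg_add_cancel, RT.rc_zero,
          TropModule.one_smul]
      rw [this]
      exact hsm _ _ huA
    · rw [Set.mem_singleton_iff.mp h0']
      exact h0
  · intro hv
    rcases eq_or_ne v 0 with rfl | hne
    · exact Or.inr rfl
    · exact Or.inl ⟨hne, ⟨v, hne, hv, rfl⟩⟩

theorem sub_sum_mem {n : ℕ} {A : Set (V n)} (hA : IsTSubmodule RT A) {ι : Type*}
    {s : Finset ι} {f : ι → V n} (h : ∀ m ∈ s, f m ∈ A) : (∑ m ∈ s, f m) ∈ A := by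
  classical
  induction s using Finset.induction_on with
  | empty => exact hA.zero_mem
  | @insert a u ha ih =>
    rw [Finset.sum_insert ha]
    exact hA.add_mem _ (h a (Finset.mem_insert_self a u)) _
      (ih fun m hm => h m (Finset.mem_insert_of_mem hm))

theorem tchull_classSet {n r : ℕ} (T : Fin r → V n) (hT0 : ∀ m, T m ≠ 0)
    (S : Finset (TP n)) (hS : ↑S = Set.range fun m => tphi (T m) (hT0 m)) :
    tchull ↑S = classSet (spanF T) := by
  have hsub : IsTSubmodule RT (spanF T) :=
    ⟨spanF_zero_mem T, fun v hv w hw => spanF_add_mem hv hw, fun a v hv => spanF_smul_mem a hv⟩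
  have hMof : Mof (classSet (spanF T)) = spanF T :=
    Mof_classSet (spanF_zero_mem T) (fun c v hv => spanF_smul_mem _ hv)
  have hconv : TropConvexP (classSet (spanF T)) := by
    rw [TropConvexP, hMof]
    exact hsub
  have hSsub : ↑S ⊆ classSet (spanF T) := by
    rw [hS]
    rintro x ⟨m, rfl⟩
    exact ⟨T m, hT0 m, spanF_mem_self T m, rfl⟩
  have hmem : ∀ Q : Set (TP n), TropConvexP Q → ↑S ⊆ Q → classSet (spanF T) ⊆ Q := by
    intro Q hQ hSQ
    have hTQ : ∀ m, T m ∈ Mof Q := by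
      intro m
      refine Or.inl ⟨hT0 m, hSQ ?_⟩
      rw [hS]
      exact ⟨m, rfl⟩
    have hspanQ : spanF T ⊆ Mof Q := by
      rintro x ⟨c, rfl⟩
      exact sub_sum_mem hQ fun m _ => hQ.smul_mem _ _ (hTQ m)
    rintro q ⟨v, hv0, hvA, rfl⟩
    rcases hspanQ hvA with ⟨h', hq'⟩ | h0'
    · exact hq'
    · exact absurd (Set.mem_singleton_iff.mp h0') hv0
  apply le_antisymm
  · exact Set.sInter_subset_of_mem ⟨hconv, hSsub⟩
  · intro q hq
    exact Set.mem_sInter.mpr fun Q ⟨h1, h2⟩ => hmem Q h1 h2 hq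

end S6
namespace S6

theorem isReal_cons {n : ℕ} (v : Fin n → ℝ) :
    IsReal (Fin.cons (rc 0) (fun i => rc (v i)) : V n) := by
  intro l
  refine Fin.cases ?_ ?_ l
  · exact WithBot.coe_ne_bot
  · intro i
    rw [Fin.cons_succ]
    exact WithBot.coe_ne_bot

end S6

theorem stmt6 {n : ℕ} (P : Set (TP n)) (hP : IsTropPolytope P)
    (N : TSub RT (Fin (n + 1) → RT)) (hN : N.carrier = Mof P)
    (hstraight : Straight ↥N.carrier)
    (hrefl : Function.Bijective (iotaFun RT ↥N.carrier)) :
    ∃ S : Finset (TP n), S.card ≤ n + 1 ∧ P = tchull ↑S := by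
  classical
  open S6 in
  obtain ⟨S, hSpts, hPS⟩ := hP
  -- vectors representing the points of `S`
  have hFex : ∀ x : {x // x ∈ S}, ∃ v : Fin n → ℝ, x.1 = embR v := fun x => hSpts x.1 x.2
  choose F hF using hFex
  let e := S.equivFin
  let T0 : Fin S.card → S6.V n :=
    fun m => Fin.cons (rc 0) (fun i => rc (F (e.symm m) i))
  have hT0real : ∀ m, S6.IsReal (T0 m) := fun m => S6.isReal_cons _
  have hT0 : ∀ m, T0 m ≠ 0 := fun m => (hT0real m).ne_zero
  have hrange : ↑S = Set.range fun m => tphi (T0 m) (hT0 m) := by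
    ext x
    constructor
    · intro hx
      refine ⟨e ⟨x, hx⟩, ?_⟩
      show tphi (T0 (e ⟨x, hx⟩)) (hT0 _) = x
      have h1 : tphi (T0 (e ⟨x, hx⟩)) (hT0 _) = embR (F (e.symm (e ⟨x, hx⟩))) := rfl
      rw [h1, Equiv.symm_apply_apply]
      exact (hF ⟨x, hx⟩).symm
    · rintro ⟨m, rfl⟩
      show tphi (T0 m) (hT0 m) ∈ (↑S : Set (TP n))
      have h1 : tphi (T0 m) (hT0 m) = embR (F (e.symm m)) := rfl
      rw [h1, ← hF (e.symm m)]
      exact (e.symm m).2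
  have hPeq : P = S6.classSet (S6.spanF T0) := by
    rw [hPS]
    exact S6.tchull_classSet T0 hT0 S hrange
  have hMofP : Mof P = S6.spanF T0 := by
    rw [hPeq]
    exact S6.Mof_classSet (S6.spanF_zero_mem T0) (fun c v hv => S6.spanF_smul_mem _ hv)
  have hNcar : S6.spanF T0 = N.carrier := by rw [hN, hMofP]
  obtain ⟨r, G, hrle, hGreal, hGspan⟩ := S6.span_small N hstraight T0 hT0real hNcar
  have hG0 : ∀ m, G m ≠ 0 := fun m => (hGreal m).ne_zero
  let S' : Finset (TP n) := Finset.image (fun m => tphi (G m) (hG0 m)) Finset.univ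
  refine ⟨S', ?_, ?_⟩
  · calc S'.card ≤ (Finset.univ : Finset (Fin r)).card := Finset.card_image_le
    _ = r := by simp
    _ ≤ n + 1 := hrle
  · have hrange' : ↑S' = Set.range fun m => tphi (G m) (hG0 m) := by
      simp only [S', Finset.coe_image, Finset.coe_univ, Set.image_univ]
    rw [S6.tchull_classSet G hG0 S' hrange', hPeq]
    congr 1
    rw [hGspan, ← hNcar]
end

section
/- Let k be a totally ordered tropical semifield and let M be a pre-reflexive k-module. Then M has a basis if and only if M is extremally generated. More precisely, a system of generators E = {e_λ : λ ∈ Λ} is a basis if and only if each e_λ is extremal and k⊙e_λ ≠ k⊙e_μ for λ ≠ μ. -/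
/-! ## Auxiliary lemmas for Statement 7 -/

section Aux

variable {k M : Type*} [TropSemifield k] [TropSemigroup M] [TropModule k M]

/-- `v` lies in the span of `T`. -/
def InSpan (k : Type*) {M : Type*} [TropSemifield k] [TropSemigroup M] [TropModule k M]
    (T : Set M) (v : M) : Prop :=
  ∃ (r : ℕ) (a : Fin r → k) (x : Fin r → M), (∀ i, x i ∈ T) ∧ v = ∑ i, a i • x i

lemma tgenerates_iff {S : Set M} : TGenerates k S ↔ ∀ v : M, InSpan k S v := Iff.rfl

lemma span_zero (T : Set M) : InSpan k T 0 :=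
  ⟨0, Fin.elim0, Fin.elim0, fun i => i.elim0, by simp⟩

lemma span_mem {T : Set M} {t : M} (ht : t ∈ T) : InSpan k T t :=
  ⟨1, fun _ => 1, fun _ => t, fun _ => ht, by
    rw [Fin.sum_univ_one, TropModule.one_smul]⟩

lemma span_add {T : Set M} {v w : M} (hv : InSpan k T v) (hw : InSpan k T w) :
    InSpan k T (v + w) := by
  obtain ⟨r, a, x, hx, rfl⟩ := hv
  obtain ⟨s, b, y, hy, rfl⟩ := hw
  refine ⟨r + s, Fin.append a b, Fin.append x y, ?_, ?_⟩
  · intro i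
    refine Fin.addCases (fun j => ?_) (fun j => ?_) i
    · simp only [Fin.append_left]; exact hx j
    · simp only [Fin.append_right]; exact hy j
  · rw [Fin.sum_univ_add]
    congr 1 <;> refine Finset.sum_congr rfl fun j _ => ?_
    · rw [Fin.append_left, Fin.append_left]
    · rw [Fin.append_right, Fin.append_right]

lemma span_smul {T : Set M} {v : M} (c : k) (hv : InSpan k T v) : InSpan k T (c • v) := by
  obtain ⟨r, a, x, hx, rfl⟩ := hv
  refine ⟨r, fun i => c * a i, x, hx, ?_⟩
  rw [tsmul_sum]
  exact Finset.sum_congr rfl fun i _ => (TropModule.mul_smul c (a i) (x i)).symm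

lemma span_sum {T : Set M} {ι : Type*} (s : Finset ι) (f : ι → M)
    (h : ∀ i ∈ s, InSpan k T (f i)) : InSpan k T (∑ i ∈ s, f i) := by
  classical
  induction s using Finset.induction_on with
  | empty => simpa using span_zero T
  | insert _ _ hns ih =>
    rw [Finset.sum_insert hns]
    exact span_add (h _ (Finset.mem_insert_self _ _))
      (ih fun i hi => h i (Finset.mem_insert_of_mem hi))

lemma span_combi {T : Set M} {ι : Type*} (s : Finset ι) (a : ι → k) (x : ι → M)
    (h : ∀ i ∈ s, x i ∈ T) : InSpan k T (∑ i ∈ s, a i • x i) :=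
  span_sum s _ fun i hi => span_smul (a i) (span_mem (h i hi))

lemma span_trans {S T : Set M} {v : M} (hST : ∀ s ∈ S, InSpan k T s)
    (hv : InSpan k S v) : InSpan k T v := by
  obtain ⟨r, a, x, hx, rfl⟩ := hv
  exact span_sum _ _ fun i _ => span_smul (a i) (hST (x i) (hx i))

lemma sum_smul_k {ι : Type*} (s : Finset ι) (a : ι → k) (v : M) :
    (∑ i ∈ s, a i) • v = ∑ i ∈ s, a i • v := by
  classical
  induction s using Finset.induction_on with
  | empty => rw [Finset.sum_empty, Finset.sum_empty]; exact TropModule.zero_smul v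
  | insert _ _ hns ih =>
    rw [Finset.sum_insert hns, Finset.sum_insert hns, TropModule.add_smul, ih]

lemma span_split {S : Set M} (e : M) {v : M} (hv : InSpan k S v) :
    ∃ (c : k) (u : M), InSpan k (S \ {e}) u ∧ v = c • e + u := by
  classical
  obtain ⟨r, a, x, hx, rfl⟩ := hv
  refine ⟨∑ i ∈ Finset.univ.filter (fun i => x i = e), a i,
    ∑ i ∈ Finset.univ.filter (fun i => ¬ x i = e), a i • x i, ?_, ?_⟩
  · exact span_combi _ _ _ fun i hi =>
      ⟨hx i, (Finset.mem_filter.mp hi).2⟩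
  · rw [← Finset.sum_filter_add_sum_filter_not Finset.univ (fun i => x i = e)
      (fun i => a i • x i)]
    congr 1
    rw [sum_smul_k]
    exact Finset.sum_congr rfl fun i hi => by rw [(Finset.mem_filter.mp hi).2]

lemma tle_refl (v : M) : tle v v := TropSemigroup.add_idem v

lemma tle_antisymm {v w : M} (h1 : tle v w) (h2 : tle w v) : v = w := by
  unfold tle at h1 h2
  rw [← h2, add_comm, h1]

lemma extremal_of_sum {e : M} (he : TExtremal e) :
    ∀ {r : ℕ} (f : Fin r → M), e = ∑ i, f i → ∃ i, e = f i := by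
  intro r
  induction r with
  | zero => intro f h; simp at h; exact absurd h he.1
  | succ n ih =>
    intro f h
    rw [Fin.sum_univ_succ] at h
    rcases he.2 _ _ h.symm with h0 | hs
    · exact ⟨0, h0.symm⟩
    · obtain ⟨i, hi⟩ := ih (fun j => f j.succ) hs.symm
      exact ⟨i.succ, hi⟩

lemma generates_remove {S : Set M} {e : M} (hS : TGenerates k S)
    (hin : InSpan k (S \ {e}) e) : TGenerates k (S \ {e}) := by
  intro v
  refine span_trans (fun s hs => ?_) (hS v)
  by_cases h : s = e
  · exact h ▸ hin
  · exact span_mem ⟨hs, h⟩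

lemma span_remove_of_not_extremal (hto : TotallyOrderedTSF k)
    (hpre : Function.Injective (iotaFun k M)) {S : Set M}
    (hS : TGenerates k S) (e : M) (hne : ¬ TExtremal e) :
    InSpan k (S \ {e}) e := by
  by_cases h0 : e = 0
  · exact h0 ▸ span_zero _
  have hne2 : ∃ v w : M, v + w = e ∧ v ≠ e ∧ w ≠ e := by
    by_contra hcon
    push_neg at hcon
    refine hne ⟨h0, fun v w hvw => ?_⟩
    by_cases hv : v = e
    · exact Or.inl hv
    · exact Or.inr (hcon v w hvw hv)
  obtain ⟨v, w, hvw, hv_ne, hw_ne⟩ := hne2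
  obtain ⟨c₁, u₁, hu₁, hv⟩ := span_split e (hS v)
  obtain ⟨c₂, u₂, hu₂, hw⟩ := span_split e (hS w)
  set c := c₁ + c₂ with hc
  set u := u₁ + u₂ with hu
  have he2 : e = c • e + u := by
    rw [hc, hu, TropModule.add_smul, add_add_add_comm, ← hv, ← hw, hvw]
  -- basic order facts
  have hvle : tle v e := by
    show v + e = e
    rw [← hvw, ← add_assoc, TropSemigroup.add_idem]
  have hwle : tle w e := by
    show w + e = e
    rw [← hvw, add_comm v w, ← add_assoc, TropSemigroup.add_idem]
  -- a generic step: if 1 ≤ c₀ and v₀ = c₀ • e + u₀ and v₀ ≤ e then v₀ = e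
  have step : ∀ (c₀ : k) (v₀ u₀ : M), (1 : k) + c₀ = c₀ → v₀ = c₀ • e + u₀ →
      tle v₀ e → v₀ = e := by
    intro c₀ v₀ u₀ h1c hv₀ hle
    have h1 : e + c₀ • e = c₀ • e := by
      calc e + c₀ • e = (1 : k) • e + c₀ • e := by rw [TropModule.one_smul]
        _ = ((1 : k) + c₀) • e := (TropModule.add_smul 1 c₀ e).symm
        _ = c₀ • e := by rw [h1c]
    have h2 : c₀ • e + v₀ = v₀ := by
      conv_lhs => rw [hv₀, ← add_assoc, TropSemigroup.add_idem, ← hv₀]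
    have h3 : tle e v₀ := by
      show e + v₀ = v₀
      rw [← h2, ← add_assoc, h1, h2]
    exact tle_antisymm hle h3
  by_cases h1c : (1 : k) + c = c
  · -- contradiction: v = e or w = e
    exfalso
    rcases hto c₁ c₂ with h12 | h21
    · have hcc : c = c₂ := h12
      exact hw_ne (step c₂ w u₂ (hcc ▸ h1c) hw hwle)
    · have hcc : c = c₁ := by rw [hc, add_comm]; exact h21
      exact hv_ne (step c₁ v u₁ (hcc ▸ h1c) hv hvle)
  · -- c < 1 strictly; use duality and pre-reflexivity
    have hc1 : c + 1 = 1 := by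
      rcases hto c 1 with h | h
      · exact h
      · exact absurd (h : (1 : k) + c = c) h1c
    have hcne : c ≠ 1 := by
      intro h; apply h1c; rw [h]; exact TropSemifield.add_idem 1
    have hkey : ∀ ξ : TropHom k M k, ξ.toFun e = ξ.toFun u := by
      intro ξ
      have hpq : ξ.toFun e = c * ξ.toFun e + ξ.toFun u := by
        conv_lhs => rw [he2]
        rw [ξ.map_add', ξ.map_smul']
        rfl
      rcases hto (c * ξ.toFun e) (ξ.toFun u) with h | h
      · exact hpq.trans h
      · have hp : ξ.toFun e = c * ξ.toFun e :=
          hpq.trans ((add_comm _ _).trans h)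
        by_cases hpz : ξ.toFun e = 0
        · rw [hpz] at hpq ⊢
          rw [mul_zero, zero_add] at hpq
          exact hpq
        · exfalso
          obtain ⟨t, ht⟩ := TropSemifield.exists_inv _ hpz
          apply hcne
          calc c = c * (ξ.toFun e * t) := by rw [ht, mul_one]
            _ = ξ.toFun e * t := by rw [← mul_assoc, ← hp]
            _ = 1 := ht
    have : iotaFun k M e = iotaFun k M u := TropHom.ext' fun ξ => hkey ξ
    have heu : e = u := hpre this
    have h' : InSpan k (S \ {e}) u := span_add hu₁ hu₂
    rwa [← heu] at h'

lemma self_mem_tray (e : M) : e ∈ tray k e := ⟨1, TropModule.one_smul e⟩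

lemma tray_eq_of_smul {e x : M} {a : k} (ha : a ≠ 0) (h : e = a • x) :
    tray k e = tray k x := by
  obtain ⟨t, ht⟩ := TropSemifield.exists_inv a ha
  have hx : x = t • e := by
    rw [h, ← TropModule.mul_smul, mul_comm, ht, TropModule.one_smul]
  apply Set.eq_of_subset_of_subset
  · rintro _ ⟨b, rfl⟩
    exact ⟨b * a, by show (b * a) • x = b • e; rw [TropModule.mul_smul, ← h]⟩
  · rintro _ ⟨b, rfl⟩
    exact ⟨b * t, by show (b * t) • e = b • x; rw [TropModule.mul_smul, ← hx]⟩

end Aux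

/-- Choice of a representative element of `S` on a given ray. -/
noncomputable def rayRep (k : Type*) {M : Type*} [TropSemifield k] [TropSemigroup M]
    [TropModule k M] (S : Set M) (R : Set M) : M :=
  @dite M (∃ x, x ∈ S ∧ tray k x = R) (Classical.dec _) (fun h => h.choose) (fun _ => 0)

lemma rayRep_spec {k M : Type*} [TropSemifield k] [TropSemigroup M] [TropModule k M]
    {S R : Set M} (h : ∃ x, x ∈ S ∧ tray k x = R) :
    rayRep k S R ∈ S ∧ tray k (rayRep k S R) = R := by
  rw [rayRep, dif_pos h]
  exact h.choose_spec

theorem stmt7 {k M : Type*} [TropSemifield k] [TropSemigroup M] [TropModule k M]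
    (hto : TotallyOrderedTSF k) (hpre : Function.Injective (iotaFun k M)) :
    ((∃ S : Set M, TBasis k S) ↔ ∃ S : Set M, TGenerates k S ∧ ∀ e ∈ S, TExtremal e) ∧
    ∀ S : Set M, TGenerates k S →
      (TBasis k S ↔ ((∀ e ∈ S, TExtremal e) ∧
        ∀ e ∈ S, ∀ e' ∈ S, e ≠ e' → tray k e ≠ tray k e')) := by
  classical
  have part2 : ∀ S : Set M, TGenerates k S →
      (TBasis k S ↔ ((∀ e ∈ S, TExtremal e) ∧
        ∀ e ∈ S, ∀ e' ∈ S, e ≠ e' → tray k e ≠ tray k e')) := by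
    intro S hgen
    constructor
    · intro hb
      constructor
      · intro e heS
        by_contra hne
        have h1 : TGenerates k (S \ {e}) :=
          generates_remove hgen (span_remove_of_not_extremal hto hpre hgen e hne)
        exact hb.2 (S \ {e}) (Set.sdiff_singleton_ssubset.mpr heS) h1
      · intro e heS e' he'S hnee htr
        have he' : e' ∈ tray k e := htr ▸ self_mem_tray e'
        obtain ⟨a, ha⟩ := he'
        have ha' : e' = a • e := ha.symm
        have hgen' : TGenerates k (S \ {e'}) := by
          intro v
          refine span_trans (fun s hs => ?_) (hgen v)
          by_cases h : s = e'
          · subst h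
            have h2 : InSpan k (S \ {s}) (a • e) :=
              span_smul a (span_mem ⟨heS, hnee⟩)
            rwa [← ha'] at h2
          · exact span_mem ⟨hs, h⟩
        exact hb.2 (S \ {e'}) (Set.sdiff_singleton_ssubset.mpr he'S) hgen'
    · rintro ⟨hext, hrays⟩
      refine ⟨hgen, fun T hT hTgen => ?_⟩
      obtain ⟨e, heS, heT⟩ := Set.not_subset.mp hT.2
      have he : TExtremal e := hext e heS
      obtain ⟨r, a, x, hx, hsum⟩ := hTgen e
      obtain ⟨i, hi⟩ := extremal_of_sum he (fun i => a i • x i) hsum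
      have hxT : x i ∈ T := hx i
      have hxS : x i ∈ S := hT.1 hxT
      have hnex : e ≠ x i := fun h => heT (h ▸ hxT)
      have hane : a i ≠ 0 := by
        intro h
        apply he.1
        rw [hi, h]
        exact TropModule.zero_smul (x i)
      exact hrays e heS (x i) hxS hnex (tray_eq_of_smul hane hi)
  refine ⟨?_, part2⟩
  constructor
  · rintro ⟨S, hb⟩
    exact ⟨S, hb.1, ((part2 S hb.1).mp hb).1⟩
  · rintro ⟨S, hgen, hext⟩
    set T : Set M := rayRep k S '' ((tray k) '' S) with hTdef
    have hTS : T ⊆ S := by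
      rintro _ ⟨R, hR, rfl⟩
      obtain ⟨y, hyS, hy⟩ := hR
      exact (rayRep_spec ⟨y, hyS, hy⟩).1
    have hTgen : TGenerates k T := by
      intro v
      refine span_trans (fun s hs => ?_) (hgen v)
      have hR : ∃ y, y ∈ S ∧ tray k y = tray k s := ⟨s, hs, rfl⟩
      obtain ⟨hmem, htr⟩ := rayRep_spec hR
      have hmem' : s ∈ tray k (rayRep k S (tray k s)) := by
        rw [htr]; exact self_mem_tray s
      obtain ⟨b, hb⟩ := hmem'
      have hb' : s = b • rayRep k S (tray k s) := hb.symm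
      have h2 : InSpan k T (b • rayRep k S (tray k s)) :=
        span_smul b (span_mem ⟨tray k s, ⟨s, hs, rfl⟩, rfl⟩)
      rwa [← hb'] at h2
    refine ⟨T, (part2 T hTgen).mpr ⟨fun e he => hext e (hTS he), ?_⟩⟩
    rintro _ ⟨R, hR, rfl⟩ _ ⟨R', hR', rfl⟩ hne
    obtain ⟨y, hyS, hy⟩ := hR
    obtain ⟨y', hy'S, hy'⟩ := hR'
    rw [(rayRep_spec ⟨y, hyS, hy⟩).2, (rayRep_spec ⟨y', hy'S, hy'⟩).2]
    intro hRR
    exact hne (hRR ▸ rfl)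
end

section
/- Let k be a tropical semifield, let α : M → N be a homomorphism of k-modules, and let w ∈ N be an extremal element. Then any minimal element of the preimage α⁻¹(w) (with respect to the canonical partial order on M) is an extremal element of M. -/
theorem stmt8 {k M N : Type*} [TropSemifield k] [TropSemigroup M] [TropModule k M]
    [TropSemigroup N] [TropModule k N]
    (α : TropHom k M N) (w : N) (hw : TExtremal w)
    (e : M) (he : α.toFun e = w)
    (hmin : ∀ v : M, α.toFun v = w → tle v e → v = e) :
    TExtremal e := by
  constructor
  · rintro rfl
    exact hw.1 (by rw [← he, α.map_zero'])
  · intro v u hvu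
    have hle : ∀ x y : M, x + y = e → tle x e := by
      intro x y h
      show x + e = e
      rw [← h, ← add_assoc, TropSemigroup.add_idem]
    have hα : α.toFun v + α.toFun u = w := by rw [← α.map_add', hvu, he]
    rcases hw.2 _ _ hα with h | h
    · exact Or.inl (hmin v h (hle v u hvu))
    · exact Or.inr (hmin u h (hle u v (by rwa [add_comm])))
end

section
/- Let k be a totally ordered tropical semifield and let α : M → N be a lattice-preserving injective homomorphism of k-modules such that N is straight. Then M is straight. -/
theorem stmt10 {k M N : Type*} [TropSemifield k] [TropSemigroup M] [TropModule k M]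
    [TropSemigroup N] [TropModule k N]
    (hto : TotallyOrderedTSF k) (α : TropHom k M N)
    (hlat : LatticePreserving α) (hinj : Function.Injective α.toFun)
    (hN : Straight N) : Straight M := by
  have mono : ∀ y v : M, tle y v → tle (α.toFun y) (α.toFun v) := by
    intro y v h
    unfold tle at *
    rw [← α.map_add', h]
  have trans : ∀ a b c : N, tle a b → tle b c → tle a c := by
    intro a b c h1 h2
    unfold tle at *
    rw [← h2, ← add_assoc, h1, h2]
  have anti : ∀ a b : N, tle a b → tle b a → a = b := by
    intro a b h1 h2
    unfold tle at *
    rw [← h2, add_comm, h1]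
  obtain ⟨hNex, hNdist⟩ := hN
  -- key: the infimum in M exists and its image is the infimum in N
  have key : ∀ v w : M, ∃ y : M, IsTInf v w y ∧
      ∀ z' : N, IsTInf (α.toFun v) (α.toFun w) z' → α.toFun y = z' := by
    intro v w
    obtain ⟨z', hz'⟩ := hNex (α.toFun v) (α.toFun w)
    obtain ⟨y, hyv, hyw, hzy⟩ := hlat v w z' hz'.1 hz'.2.1
    have hinfy : IsTInf v w y := by
      refine ⟨hyv, hyw, ?_⟩
      intro y' h1 h2
      have h3 : tle (α.toFun y') (α.toFun y) :=
        trans _ _ _ (hz'.2.2 (α.toFun y') (mono _ _ h1) (mono _ _ h2)) hzy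
      have : α.toFun (y' + y) = α.toFun y := by rw [α.map_add']; exact h3
      exact hinj this
    have hye : α.toFun y = z' :=
      anti _ _ (hz'.2.2 _ (mono _ _ hyv) (mono _ _ hyw)) hzy
    refine ⟨y, hinfy, ?_⟩
    intro z'' hz''
    rw [hye]
    exact anti _ _ (hz''.2.2 _ hz'.1 hz'.2.1) (hz'.2.2 _ hz''.1 hz''.2.1)
  constructor
  · intro v w
    obtain ⟨y, hy, _⟩ := key v w
    exact ⟨y, hy⟩
  · intro v₁ v₂ w z₁ z₂ h1 h2
    refine ⟨?_, ?_, ?_⟩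
    · show tle (z₁ + z₂) (v₁ + v₂)
      unfold tle
      rw [add_add_add_comm, h1.1, h2.1]
    · show tle (z₁ + z₂) w
      unfold tle
      rw [add_assoc, h2.2.1, h1.2.1]
    · intro y hyv hyw
      -- infima in N
      obtain ⟨u₁, hu₁⟩ := hNex (α.toFun v₁) (α.toFun w)
      obtain ⟨u₂, hu₂⟩ := hNex (α.toFun v₂) (α.toFun w)
      -- α z₁ = u₁, α z₂ = u₂
      have e₁ : α.toFun z₁ = u₁ := by
        obtain ⟨y₁, hy₁v, hy₁w, hu₁y⟩ := hlat v₁ w u₁ hu₁.1 hu₁.2.1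
        have : tle u₁ (α.toFun z₁) :=
          trans _ _ _ hu₁y (mono _ _ (h1.2.2 y₁ hy₁v hy₁w))
        exact anti _ _ (hu₁.2.2 _ (mono _ _ h1.1) (mono _ _ h1.2.1)) this
      have e₂ : α.toFun z₂ = u₂ := by
        obtain ⟨y₂, hy₂v, hy₂w, hu₂y⟩ := hlat v₂ w u₂ hu₂.1 hu₂.2.1
        have : tle u₂ (α.toFun z₂) :=
          trans _ _ _ hu₂y (mono _ _ (h2.2.2 y₂ hy₂v hy₂w))
        exact anti _ _ (hu₂.2.2 _ (mono _ _ h2.1) (mono _ _ h2.2.1)) this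
      have hdist := hNdist (α.toFun v₁) (α.toFun v₂) (α.toFun w) u₁ u₂ hu₁ hu₂
      have hαy : tle (α.toFun y) (u₁ + u₂) := by
        apply hdist.2.2
        · have := mono _ _ hyv
          rwa [α.map_add'] at this
        · exact mono _ _ hyw
      have : α.toFun (y + (z₁ + z₂)) = α.toFun (z₁ + z₂) := by
        rw [α.map_add', α.map_add', e₁, e₂]
        exact hαy
      exact hinj this
end

section
/- Let k be a quasi-complete totally ordered rational tropical semifield and let M be a straight k-module. Then both the dual module M∨ and the module of locators Loc(M) are straight. -/
namespace Stmt11Aux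

/-! ### Basic order lemmas -/

section Order
variable {A : Type*} [TropSemigroup A]

theorem tle_refl (a : A) : tle a a := TropSemigroup.add_idem a

theorem tle_trans {a b c : A} (h1 : tle a b) (h2 : tle b c) : tle a c := by
  unfold tle at *
  rw [← h2, ← add_assoc, h1]

theorem tle_antisymm {a b : A} (h1 : tle a b) (h2 : tle b a) : a = b :=
  calc a = b + a := h2.symm
    _ = a + b := add_comm b a
    _ = b := h1

theorem tle_add_left (a b : A) : tle a (a + b) := by
  show a + (a + b) = a + b
  rw [← add_assoc, TropSemigroup.add_idem]

theorem tle_add_right (a b : A) : tle b (a + b) := by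
  rw [add_comm]; exact tle_add_left b a

theorem add_tle {a b c : A} (h1 : tle a c) (h2 : tle b c) : tle (a + b) c := by
  show a + b + c = c
  rw [add_assoc, h2, h1]

theorem add_tle_add {a b c d : A} (h1 : tle a b) (h2 : tle c d) : tle (a + c) (b + d) := by
  show a + c + (b + d) = b + d
  rw [add_add_add_comm, h1, h2]

theorem zero_tle (a : A) : tle (0 : A) a := zero_add a

theorem tle_zero {a : A} (h : tle a 0) : a = 0 := (add_zero a).symm.trans h

theorem tle_tlt_trans {a b c : A} (h1 : tle a b) (h2 : tlt b c) : tlt a c :=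
  ⟨tle_trans h1 h2.1, fun he => h2.2 (tle_antisymm h2.1 (he ▸ h1))⟩

theorem isTInf_eq {v w z z' : A} (h : IsTInf v w z) (h' : IsTInf v w z') : z = z' :=
  tle_antisymm (h'.2.2 z h.1 h.2.1) (h.2.2 z' h'.1 h'.2.1)

end Order

/-! ### Lemmas about the semifield `k` -/

section Semifield
variable {k : Type*} [TropSemifield k]

theorem max_choice (hto : TotallyOrderedTSF k) (a b : k) : a + b = a ∨ a + b = b :=
  (hto a b).elim (fun h => Or.inr h) (fun h => Or.inl (by rw [add_comm]; exact h))

theorem tlt_of_not_tle (hto : TotallyOrderedTSF k) {a b : k} (h : ¬ tle a b) : tlt b a :=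
  ⟨(hto a b).resolve_left h, fun he => by cases he; exact h (tle_refl _)⟩

theorem add_tlt (hto : TotallyOrderedTSF k) {a b c : k} (h1 : tlt a c) (h2 : tlt b c) :
    tlt (a + b) c := by
  refine ⟨add_tle h1.1 h2.1, ?_⟩
  rcases max_choice hto a b with h | h
  · rw [h]; exact h1.2
  · rw [h]; exact h2.2

theorem exists_min (hto : TotallyOrderedTSF k) (a b : k) :
    ∃ m : k, (m = a ∨ m = b) ∧ tle m a ∧ tle m b :=
  (hto a b).elim (fun h => ⟨a, Or.inl rfl, tle_refl a, h⟩)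
    (fun h => ⟨b, Or.inr rfl, h, tle_refl b⟩)

theorem mul_tle_mul_left {a b : k} (c : k) (h : tle a b) : tle (c * a) (c * b) := by
  show c * a + c * b = c * b
  rw [← mul_add, h]

theorem mul_tle_mul_right {a b : k} (c : k) (h : tle a b) : tle (a * c) (b * c) := by
  rw [mul_comm a c, mul_comm b c]; exact mul_tle_mul_left c h

theorem tinv_mul {a : k} (h : a ≠ 0) : a * tinv a = 1 := by
  unfold tinv
  rw [dif_neg h]
  exact Classical.choose_spec (TropSemifield.exists_inv a h)

theorem one_ne_zero' (hrat : RationalTSF k) : (1 : k) ≠ 0 := by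
  obtain ⟨b, hb⟩ := hrat.2 0
  intro h
  exact hb.2 (show (0:k) = b by rw [← mul_one b, h, mul_zero])

theorem tinv_ne_zero (hrat : RationalTSF k) {a : k} (h : a ≠ 0) : tinv a ≠ 0 := by
  intro h0
  exact one_ne_zero' hrat (by rw [← tinv_mul h, h0, mul_zero])

/-! ### Infima in `k` -/

noncomputable def tInf (hqc : QuasiCompleteTSF k) (S : Set k) (h : S.Nonempty) : k :=
  (hqc S h).choose

theorem tInf_le (hqc : QuasiCompleteTSF k) {S : Set k} (h : S.Nonempty) {x : k} (hx : x ∈ S) :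
    tle (tInf hqc S h) x := (hqc S h).choose_spec.1 x hx

theorem le_tInf (hqc : QuasiCompleteTSF k) {S : Set k} (h : S.Nonempty) {d : k}
    (hd : ∀ x ∈ S, tle d x) : tle d (tInf hqc S h) := (hqc S h).choose_spec.2 d hd

theorem exists_lt_of_tInf_lt (hto : TotallyOrderedTSF k) (hqc : QuasiCompleteTSF k)
    {S : Set k} (h : S.Nonempty) {e : k} (he : tlt (tInf hqc S h) e) :
    ∃ x ∈ S, tlt x e := by
  by_contra hc
  push_neg at hc
  have hlb : ∀ x ∈ S, tle e x := by
    intro x hx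
    by_cases h1 : tle e x
    · exact h1
    · exact absurd (tlt_of_not_tle hto h1) (hc x hx)
  have h2 : tle e (tInf hqc S h) := le_tInf hqc h hlb
  exact he.2 (tle_antisymm he.1 h2)

theorem tInf_le_of_forall_lt (hto : TotallyOrderedTSF k) (hqc : QuasiCompleteTSF k)
    {S : Set k} (h : S.Nonempty) {d : k}
    (hlt : ∀ e, tlt d e → ∃ x ∈ S, tlt x e) : tle (tInf hqc S h) d := by
  by_cases hc : tle (tInf hqc S h) d
  · exact hc
  obtain ⟨x, hxS, hxlt⟩ := hlt _ (tlt_of_not_tle hto hc)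
  exact (hxlt.2 (tle_antisymm hxlt.1 (tInf_le hqc h hxS))).elim

end Semifield

/-! ### Infima in a straight module -/

section Minf
variable {M : Type*} [TropSemigroup M]

noncomputable def minf (hM : Straight M) (v w : M) : M := (hM.1 v w).choose

theorem isTInf_minf (hM : Straight M) (v w : M) : IsTInf v w (minf hM v w) :=
  (hM.1 v w).choose_spec

theorem minf_le_left (hM : Straight M) (v w : M) : tle (minf hM v w) v :=
  (isTInf_minf hM v w).1

theorem minf_le_right (hM : Straight M) (v w : M) : tle (minf hM v w) w :=
  (isTInf_minf hM v w).2.1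

theorem le_minf (hM : Straight M) {v w y : M} (h1 : tle y v) (h2 : tle y w) :
    tle y (minf hM v w) := (isTInf_minf hM v w).2.2 y h1 h2

theorem isTInf_unique (hM : Straight M) {v w z : M} (h : IsTInf v w z) : z = minf hM v w :=
  isTInf_eq h (isTInf_minf hM v w)

theorem minf_comm (hM : Straight M) (v w : M) : minf hM v w = minf hM w v :=
  isTInf_unique hM ⟨(isTInf_minf hM v w).2.1, (isTInf_minf hM v w).1,
    fun y h1 h2 => (isTInf_minf hM v w).2.2 y h2 h1⟩

theorem minf_eq_left (hM : Straight M) {v w : M} (h : tle v w) : minf hM v w = v :=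
  (isTInf_unique hM ⟨tle_refl v, h, fun _ hy _ => hy⟩).symm

theorem minf_add_left (hM : Straight M) (v₁ v₂ w : M) :
    minf hM (v₁ + v₂) w = minf hM v₁ w + minf hM v₂ w :=
  (isTInf_unique hM (hM.2 v₁ v₂ w _ _ (isTInf_minf hM v₁ w) (isTInf_minf hM v₂ w))).symm

theorem minf_add_right (hM : Straight M) (v w₁ w₂ : M) :
    minf hM v (w₁ + w₂) = minf hM v w₁ + minf hM v w₂ := by
  rw [minf_comm hM v (w₁ + w₂), minf_add_left hM w₁ w₂ v, minf_comm hM w₁ v,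
    minf_comm hM w₂ v]

theorem decomp_split (hM : Straight M) {v u₁ u₂ : M} (h : tle v (u₁ + u₂)) :
    minf hM v u₁ + minf hM v u₂ = v := by
  rw [← minf_add_right hM v u₁ u₂]
  exact minf_eq_left hM h

theorem decomp_merge (hM : Straight M) {v v₁ v₂ w₁ w₂ : M} (h1 : v₁ + v₂ = v)
    (h2 : w₁ + w₂ = v) : minf hM v₁ w₁ + (v₂ + w₂) = v := by
  have hv₁v : tle v₁ v := h1 ▸ tle_add_left v₁ v₂
  have hv₂v : tle v₂ v := h1 ▸ tle_add_right v₁ v₂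
  have hw₁v : tle w₁ v := h2 ▸ tle_add_left w₁ w₂
  have hw₂v : tle w₂ v := h2 ▸ tle_add_right w₁ w₂
  have hcomp : v₁ + (v₂ + w₂) = v := by
    rw [← add_assoc, h1, add_comm]
    exact hw₂v
  have hkey : w₁ = minf hM v₁ w₁ + minf hM (v₂ + w₂) w₁ := by
    rw [← minf_add_left hM v₁ (v₂ + w₂) w₁, hcomp, minf_comm hM v w₁,
      minf_eq_left hM hw₁v]
  apply tle_antisymm
  · exact add_tle (tle_trans (minf_le_left hM v₁ w₁) hv₁v) (add_tle hv₂v hw₂v)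
  · have : tle w₁ (minf hM v₁ w₁ + (v₂ + w₂)) := by
      have h3 := add_tle_add (tle_refl (minf hM v₁ w₁)) (minf_le_left hM (v₂ + w₂) w₁)
      rw [← hkey] at h3
      exact h3
    have hw₂ : tle w₂ (minf hM v₁ w₁ + (v₂ + w₂)) :=
      tle_trans (tle_add_right v₂ w₂) (tle_add_right _ _)
    rw [← h2]
    exact add_tle this hw₂

end Minf

/-! ### The dual module -/

section Dual
variable {k M : Type*} [TropSemifield k] [TropSemigroup M] [TropModule k M]

theorem hom_tle_iff {f g : TropHom k M k} :
    tle f g ↔ ∀ v, tle (f.toFun v) (g.toFun v) := by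
  constructor
  · intro h v
    exact congrArg (fun F => TropHom.toFun F v) h
  · intro h
    exact TropHom.ext' fun v => h v

theorem hom_mono (ξ : TropHom k M k) {v w : M} (h : tle v w) :
    tle (ξ.toFun v) (ξ.toFun w) := by
  show ξ.toFun v + ξ.toFun w = ξ.toFun w
  rw [← ξ.map_add', show v + w = w from h]

theorem smul_tle_smul (a : k) {v w : M} (h : tle v w) : tle (a • v) (a • w) := by
  show a • v + a • w = a • w
  rw [← TropModule.smul_add, show v + w = w from h]

theorem smul_tle_smul_right {a b : k} (v : M) (h : tle a b) : tle (a • v) (b • v) := by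
  show a • v + b • v = b • v
  rw [← TropModule.add_smul, show a + b = b from h]

def infSet (ξ η : TropHom k M k) (v : M) : Set k :=
  {c | ∃ v₁ v₂ : M, v₁ + v₂ = v ∧ c = ξ.toFun v₁ + η.toFun v₂}

theorem infSet_nonempty (ξ η : TropHom k M k) (v : M) : (infSet ξ η v).Nonempty :=
  ⟨ξ.toFun v + η.toFun 0, v, 0, add_zero v, rfl⟩

noncomputable def zetaF (hqc : QuasiCompleteTSF k) (ξ η : TropHom k M k) (v : M) : k :=
  tInf hqc (infSet ξ η v) (infSet_nonempty ξ η v)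

theorem zetaF_le_left (hqc : QuasiCompleteTSF k) (ξ η : TropHom k M k) (v : M) :
    tle (zetaF hqc ξ η v) (ξ.toFun v) :=
  tInf_le hqc _ ⟨v, 0, add_zero v, by rw [η.map_zero', add_zero]⟩

theorem zetaF_le_right (hqc : QuasiCompleteTSF k) (ξ η : TropHom k M k) (v : M) :
    tle (zetaF hqc ξ η v) (η.toFun v) :=
  tInf_le hqc _ ⟨0, v, zero_add v, by rw [ξ.map_zero', zero_add]⟩

theorem le_zetaF (hqc : QuasiCompleteTSF k) {y ξ η : TropHom k M k}
    (hy1 : tle y ξ) (hy2 : tle y η) (v : M) :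
    tle (y.toFun v) (zetaF hqc ξ η v) := by
  apply le_tInf
  rintro c ⟨v₁, v₂, hv, rfl⟩
  have h1 : y.toFun v = y.toFun v₁ + y.toFun v₂ := by rw [← y.map_add', hv]
  rw [h1]
  exact add_tle_add (hom_tle_iff.mp hy1 v₁) (hom_tle_iff.mp hy2 v₂)

theorem zetaF_zero (hqc : QuasiCompleteTSF k) (ξ η : TropHom k M k) :
    zetaF hqc ξ η 0 = 0 :=
  tle_zero (tInf_le hqc _
    ⟨0, 0, add_zero 0, by rw [ξ.map_zero', η.map_zero', add_zero]⟩)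

theorem zetaF_le_add_left (hqc : QuasiCompleteTSF k) (hM : Straight M)
    (ξ η : TropHom k M k) (v w : M) :
    tle (zetaF hqc ξ η v) (zetaF hqc ξ η (v + w)) := by
  apply le_tInf
  rintro c ⟨u₁, u₂, hu, rfl⟩
  have hv : tle v (u₁ + u₂) := by
    rw [show u₁ + u₂ = v + w from hu]; exact tle_add_left v w
  have h1 : tle (zetaF hqc ξ η v) (ξ.toFun (minf hM v u₁) + η.toFun (minf hM v u₂)) :=
    tInf_le hqc _ ⟨_, _, decomp_split hM hv, rfl⟩
  exact tle_trans h1 (add_tle_add (hom_mono ξ (minf_le_right hM v u₁))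
    (hom_mono η (minf_le_right hM v u₂)))

theorem zetaF_add (hto : TotallyOrderedTSF k) (hqc : QuasiCompleteTSF k) (hM : Straight M)
    (ξ η : TropHom k M k) (v w : M) :
    zetaF hqc ξ η (v + w) = zetaF hqc ξ η v + zetaF hqc ξ η w := by
  apply tle_antisymm
  · apply tInf_le_of_forall_lt hto hqc
    intro e he
    have h1 : tlt (zetaF hqc ξ η v) e := tle_tlt_trans (tle_add_left _ _) he
    have h2 : tlt (zetaF hqc ξ η w) e := tle_tlt_trans (tle_add_right _ _) he
    obtain ⟨c₁, hc₁S, hc₁⟩ := exists_lt_of_tInf_lt hto hqc _ h1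
    obtain ⟨c₂, hc₂S, hc₂⟩ := exists_lt_of_tInf_lt hto hqc _ h2
    obtain ⟨v₁, v₂, hv, rfl⟩ := hc₁S
    obtain ⟨w₁, w₂, hw, rfl⟩ := hc₂S
    refine ⟨(ξ.toFun v₁ + η.toFun v₂) + (ξ.toFun w₁ + η.toFun w₂),
      ⟨v₁ + w₁, v₂ + w₂, by rw [add_add_add_comm, hv, hw],
        by rw [ξ.map_add', η.map_add', add_add_add_comm]⟩,
      add_tlt hto hc₁ hc₂⟩
  · refine add_tle (zetaF_le_add_left hqc hM ξ η v w) ?_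
    have h := zetaF_le_add_left hqc hM ξ η w v
    rw [add_comm w v] at h
    exact h

theorem zetaF_smul_le (hqc : QuasiCompleteTSF k) {a : k} (ha : a ≠ 0)
    (ξ η : TropHom k M k) (v : M) :
    tle (a * zetaF hqc ξ η v) (zetaF hqc ξ η (a • v)) := by
  apply le_tInf
  rintro c ⟨u₁, u₂, hu, rfl⟩
  have hdec : tinv a • u₁ + tinv a • u₂ = v := by
    rw [← TropModule.smul_add, hu, ← TropModule.mul_smul, mul_comm, tinv_mul ha,
      TropModule.one_smul]
  have h1 : tle (zetaF hqc ξ η v) (ξ.toFun (tinv a • u₁) + η.toFun (tinv a • u₂)) :=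
    tInf_le hqc _ ⟨_, _, hdec, rfl⟩
  have h2 := mul_tle_mul_left a h1
  have h3 : a * (ξ.toFun (tinv a • u₁) + η.toFun (tinv a • u₂)) =
      ξ.toFun u₁ + η.toFun u₂ := by
    rw [mul_add, ← smul_eq_mul (α := k), ← smul_eq_mul (α := k), ← ξ.map_smul', ← η.map_smul',
      ← TropModule.mul_smul, ← TropModule.mul_smul, tinv_mul ha,
      TropModule.one_smul, TropModule.one_smul]
  rw [h3] at h2
  exact h2

theorem zetaF_smul (hto : TotallyOrderedTSF k) (hqc : QuasiCompleteTSF k)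
    (hrat : RationalTSF k) (ξ η : TropHom k M k) (a : k) (v : M) :
    zetaF hqc ξ η (a • v) = a * zetaF hqc ξ η v := by
  by_cases ha : a = 0
  · subst ha
    rw [TropModule.zero_smul, zetaF_zero, zero_mul]
  · apply tle_antisymm
    · have hb := zetaF_smul_le hqc (tinv_ne_zero hrat ha) ξ η (a • v)
      have hv : tinv a • (a • v) = v := by
        rw [← TropModule.mul_smul, mul_comm, tinv_mul ha, TropModule.one_smul]
      rw [hv] at hb
      have h2 := mul_tle_mul_left a hb
      rw [← mul_assoc, tinv_mul ha, one_mul] at h2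
      exact h2
    · exact zetaF_smul_le hqc ha ξ η v

noncomputable def zeta (hto : TotallyOrderedTSF k) (hqc : QuasiCompleteTSF k)
    (hrat : RationalTSF k) (hM : Straight M) (ξ η : TropHom k M k) : TropHom k M k where
  toFun := zetaF hqc ξ η
  map_zero' := zetaF_zero hqc ξ η
  map_add' := zetaF_add hto hqc hM ξ η
  map_smul' := fun a v => by
    rw [zetaF_smul hto hqc hrat ξ η a v, smul_eq_mul (α := k)]

theorem zeta_isTInf (hto : TotallyOrderedTSF k) (hqc : QuasiCompleteTSF k)
    (hrat : RationalTSF k) (hM : Straight M) (ξ η : TropHom k M k) :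
    IsTInf ξ η (zeta hto hqc hrat hM ξ η) :=
  ⟨hom_tle_iff.mpr fun v => zetaF_le_left hqc ξ η v,
   hom_tle_iff.mpr fun v => zetaF_le_right hqc ξ η v,
   fun _ h1 h2 => hom_tle_iff.mpr fun v => le_zetaF hqc h1 h2 v⟩

theorem zeta_distrib (hto : TotallyOrderedTSF k) (hqc : QuasiCompleteTSF k)
    (hrat : RationalTSF k) (hM : Straight M) (ξ₁ ξ₂ η : TropHom k M k) :
    IsTInf (ξ₁ + ξ₂) η (zeta hto hqc hrat hM ξ₁ η + zeta hto hqc hrat hM ξ₂ η) := by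
  refine ⟨add_tle_add (zeta_isTInf hto hqc hrat hM ξ₁ η).1 (zeta_isTInf hto hqc hrat hM ξ₂ η).1,
    add_tle (zeta_isTInf hto hqc hrat hM ξ₁ η).2.1 (zeta_isTInf hto hqc hrat hM ξ₂ η).2.1, ?_⟩
  intro y hy1 hy2
  apply hom_tle_iff.mpr
  intro v
  have hA : tle (y.toFun v) (zetaF hqc (ξ₁ + ξ₂) η v) := le_zetaF hqc hy1 hy2 v
  have hB : tle (zetaF hqc (ξ₁ + ξ₂) η v) (zetaF hqc ξ₁ η v + zetaF hqc ξ₂ η v) := by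
    apply tInf_le_of_forall_lt hto hqc
    intro e he
    have h1 : tlt (zetaF hqc ξ₁ η v) e := tle_tlt_trans (tle_add_left _ _) he
    have h2 : tlt (zetaF hqc ξ₂ η v) e := tle_tlt_trans (tle_add_right _ _) he
    obtain ⟨c₁, hc₁S, hc₁⟩ := exists_lt_of_tInf_lt hto hqc _ h1
    obtain ⟨c₂, hc₂S, hc₂⟩ := exists_lt_of_tInf_lt hto hqc _ h2
    obtain ⟨v₁, v₂, hv, rfl⟩ := hc₁S
    obtain ⟨w₁, w₂, hw, rfl⟩ := hc₂S
    refine ⟨(ξ₁ + ξ₂).toFun (minf hM v₁ w₁) + η.toFun (v₂ + w₂),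
      ⟨_, _, decomp_merge hM hv hw, rfl⟩, ?_⟩
    rw [η.map_add']
    refine tle_tlt_trans ?_ (add_tlt hto hc₁ hc₂)
    have t1 : tle (ξ₁.toFun (minf hM v₁ w₁))
        ((ξ₁.toFun v₁ + η.toFun v₂) + (ξ₂.toFun w₁ + η.toFun w₂)) :=
      tle_trans (hom_mono ξ₁ (minf_le_left hM v₁ w₁))
        (tle_trans (tle_add_left _ _) (tle_add_left _ _))
    have t2 : tle (ξ₂.toFun (minf hM v₁ w₁))
        ((ξ₁.toFun v₁ + η.toFun v₂) + (ξ₂.toFun w₁ + η.toFun w₂)) :=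
      tle_trans (hom_mono ξ₂ (minf_le_right hM v₁ w₁))
        (tle_trans (tle_add_left _ _) (tle_add_right _ _))
    have t3 : tle (η.toFun v₂)
        ((ξ₁.toFun v₁ + η.toFun v₂) + (ξ₂.toFun w₁ + η.toFun w₂)) :=
      tle_trans (tle_add_right _ _) (tle_add_left _ _)
    have t4 : tle (η.toFun w₂)
        ((ξ₁.toFun v₁ + η.toFun v₂) + (ξ₂.toFun w₁ + η.toFun w₂)) :=
      tle_trans (tle_add_right _ _) (tle_add_right _ _)
    exact add_tle (add_tle t1 t2) (add_tle t3 t4)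
  exact tle_trans hA hB

theorem dual_straight (hto : TotallyOrderedTSF k) (hqc : QuasiCompleteTSF k)
    (hrat : RationalTSF k) (hM : Straight M) : Straight (TropHom k M k) := by
  constructor
  · exact fun ξ η => ⟨zeta hto hqc hrat hM ξ η, zeta_isTInf hto hqc hrat hM ξ η⟩
  · intro ξ₁ ξ₂ η z₁ z₂ h₁ h₂
    rw [isTInf_eq h₁ (zeta_isTInf hto hqc hrat hM ξ₁ η),
      isTInf_eq h₂ (zeta_isTInf hto hqc hrat hM ξ₂ η)]
    exact zeta_distrib hto hqc hrat hM ξ₁ ξ₂ η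

end Dual

/-! ### Locators -/

section Loc
variable {k M : Type*} [TropSemifield k] [TropSemigroup M] [TropModule k M]

theorem tgen_mono {S U : Set M} (h : TGenerates k S) (hsub : S ⊆ U) : TGenerates k U :=
  fun v => by
    obtain ⟨r, a, x, hx, hv⟩ := h v
    exact ⟨r, a, x, fun i => hsub (hx i), hv⟩

theorem sum_mem_of_mem {S : Set M} (hadd : ∀ v ∈ S, ∀ w ∈ S, v + w ∈ S)
    (h0 : (0 : M) ∈ S) {ι : Type*} (s : Finset ι) (f : ι → M)
    (hf : ∀ i ∈ s, f i ∈ S) : ∑ i ∈ s, f i ∈ S := by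
  classical
  induction s using Finset.induction_on with
  | empty => simpa using h0
  | @insert j s hj ih =>
      rw [Finset.sum_insert hj]
      exact hadd _ (hf j (Finset.mem_insert_self j s)) _
        (ih fun i hi => hf i (Finset.mem_insert_of_mem hi))

theorem zero_mem_loc {S : Set M} (hS : IsLocator k S) (h : S.Nonempty) : (0 : M) ∈ S := by
  obtain ⟨s, hs⟩ := h
  exact hS.lower 0 s (zero_add s) hs

theorem exists_unit_lower {ι : Type*} (hto : TotallyOrderedTSF k) (hrat : RationalTSF k)
    (s : Finset ι) (a : ι → k) :
    ∃ b : k, b ≠ 0 ∧ ∀ i ∈ s, a i ≠ 0 → tle (b * a i) 1 := by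
  classical
  induction s using Finset.induction_on with
  | empty => exact ⟨1, one_ne_zero' hrat, by simp⟩
  | @insert j s hj ih =>
      obtain ⟨b, hb0, hb⟩ := ih
      by_cases haj : a j = 0
      · refine ⟨b, hb0, fun i hi hai => ?_⟩
        rcases Finset.mem_insert.mp hi with h | h
        · exact absurd (h ▸ hai) (fun hc => hc haj)
        · exact hb i h hai
      · obtain ⟨m, hm, hma, hmc⟩ := exists_min hto b (tinv (a j))
        refine ⟨m, ?_, fun i hi hai => ?_⟩
        · rcases hm with h | h
          · rw [h]; exact hb0
          · rw [h]; exact tinv_ne_zero hrat haj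
        · rcases Finset.mem_insert.mp hi with h | h
          · subst h
            have h1 : tle (m * a i) (tinv (a i) * a i) := mul_tle_mul_right (a i) hmc
            rw [mul_comm (tinv (a i)), tinv_mul hai] at h1
            exact h1
          · exact tle_trans (mul_tle_mul_right (a i) hma) (hb i h hai)

theorem exists_smul_mem (hto : TotallyOrderedTSF k) (hrat : RationalTSF k)
    {S : Set M} (hS : IsLocator k S) (v : M) :
    v = 0 ∨ ∃ a : k, a ≠ 0 ∧ a • v ∈ S := by
  obtain ⟨r, a, x, hx, hv⟩ := hS.generates v
  rcases Nat.eq_zero_or_pos r with h0 | hpos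
  · left; subst h0; simpa using hv
  · right
    have hS0 : (0 : M) ∈ S := zero_mem_loc hS ⟨x ⟨0, hpos⟩, hx _⟩
    obtain ⟨b, hb0, hb⟩ := exists_unit_lower hto hrat (Finset.univ : Finset (Fin r)) a
    refine ⟨b, hb0, ?_⟩
    rw [hv, tsmul_sum]
    apply sum_mem_of_mem hS.add_mem hS0
    intro i _
    rw [← TropModule.mul_smul]
    by_cases hai : a i = 0
    · rw [hai, mul_zero, TropModule.zero_smul]; exact hS0
    · refine hS.lower _ _ ?_ (hx i)
      have h1 : tle ((b * a i) • x i) ((1 : k) • x i) :=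
        smul_tle_smul_right (x i) (hb i (Finset.mem_univ i) hai)
      rw [TropModule.one_smul] at h1
      exact h1

theorem tgenerates_of {S : Set M}
    (h : ∀ v : M, v = 0 ∨ ∃ a : k, a ≠ 0 ∧ a • v ∈ S) : TGenerates k S := by
  intro v
  rcases h v with h0 | ⟨a, ha, haS⟩
  · exact ⟨0, fun i => i.elim0, fun i => i.elim0, fun i => i.elim0, by simp [h0]⟩
  · refine ⟨1, fun _ => tinv a, fun _ => a • v, fun _ => haS, ?_⟩
    rw [Fin.sum_univ_one, ← TropModule.mul_smul, mul_comm, tinv_mul ha,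
      TropModule.one_smul]

theorem inter_locator (hto : TotallyOrderedTSF k) (hrat : RationalTSF k)
    {S T : Set M} (hS : IsLocator k S) (hT : IsLocator k T) : IsLocator k (S ∩ T) := by
  refine ⟨fun v w h hw => ⟨hS.lower v w h hw.1, hT.lower v w h hw.2⟩,
    fun v hv w hw => ⟨hS.add_mem v hv.1 w hw.1, hT.add_mem v hv.2 w hw.2⟩, ?_⟩
  apply tgenerates_of
  intro v
  rcases exists_smul_mem hto hrat hS v with h0 | ⟨a, ha, haS⟩
  · exact Or.inl h0
  rcases exists_smul_mem hto hrat hT v with h0 | ⟨b, hb, hbT⟩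
  · exact Or.inl h0
  right
  obtain ⟨m, hm, hma, hmb⟩ := exists_min hto a b
  refine ⟨m, ?_, ?_, ?_⟩
  · rcases hm with h | h
    · rw [h]; exact ha
    · rw [h]; exact hb
  · exact hS.lower _ _ (smul_tle_smul_right v hma) haS
  · exact hT.lower _ _ (smul_tle_smul_right v hmb) hbT

/-- The smallest locator containing two given locators. -/
def locJoin (S T : Set M) : Set M :=
  {v | ∃ u, tle v u ∧ (u ∈ S ∨ u ∈ T ∨ ∃ s ∈ S, ∃ t ∈ T, u = s + t)}

theorem subset_locJoin_left {S T : Set M} : S ⊆ locJoin S T :=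
  fun s hs => ⟨s, tle_refl s, Or.inl hs⟩

theorem subset_locJoin_right {S T : Set M} : T ⊆ locJoin S T :=
  fun t ht => ⟨t, tle_refl t, Or.inr (Or.inl ht)⟩

theorem locJoin_locator {S T : Set M} (hS : IsLocator k S) (hT : IsLocator k T) :
    IsLocator k (locJoin S T) := by
  refine ⟨?_, ?_, tgen_mono hS.generates subset_locJoin_left⟩
  · rintro v w hvw ⟨u, hwu, hu⟩
    exact ⟨u, tle_trans hvw hwu, hu⟩
  · rintro v ⟨u, hvu, hu⟩ w ⟨u', hwu', hu'⟩
    refine ⟨u + u', add_tle_add hvu hwu', ?_⟩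
    rcases hu with hu | hu | ⟨s, hs, t, ht, rfl⟩ <;>
      rcases hu' with hu' | hu' | ⟨s', hs', t', ht', rfl⟩
    · exact Or.inl (hS.add_mem u hu u' hu')
    · exact Or.inr (Or.inr ⟨u, hu, u', hu', rfl⟩)
    · exact Or.inr (Or.inr ⟨u + s', hS.add_mem u hu s' hs', t', ht', (add_assoc u s' t').symm⟩)
    · exact Or.inr (Or.inr ⟨u', hu', u, hu, add_comm u u'⟩)
    · exact Or.inr (Or.inl (hT.add_mem u hu u' hu'))
    · exact Or.inr (Or.inr ⟨s', hs', u + t', hT.add_mem u hu t' ht', add_left_comm u s' t'⟩)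
    · exact Or.inr (Or.inr ⟨s + u', hS.add_mem s hs u' hu', t, ht, add_right_comm s t u'⟩)
    · exact Or.inr (Or.inr ⟨s, hs, t + u', hT.add_mem t ht u' hu', add_assoc s t u'⟩)
    · exact Or.inr (Or.inr ⟨s + s', hS.add_mem s hs s' hs', t + t', hT.add_mem t ht t' ht',
        add_add_add_comm s t s' t'⟩)

theorem locJoin_subset {S T W : Set M} (hW : IsLocator k W) (hSW : S ⊆ W) (hTW : T ⊆ W) :
    locJoin S T ⊆ W := by
  rintro v ⟨u, hvu, hu⟩
  refine hW.lower v u hvu ?_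
  rcases hu with hu | hu | ⟨s, hs, t, ht, rfl⟩
  · exact hSW hu
  · exact hTW hu
  · exact hW.add_mem s (hSW hs) t (hTW ht)

theorem locJoin_isLocInf {S T : Set M} (hS : IsLocator k S) (hT : IsLocator k T) :
    IsLocInf k S T (locJoin S T) :=
  ⟨locJoin_locator hS hT, subset_locJoin_left, subset_locJoin_right,
    fun _ hW hSW hTW => locJoin_subset hW hSW hTW⟩

theorem minf_mem_W (hM : Straight M) {S₁ S₂ T W : Set M}
    (hS₁ : IsLocator k S₁) (hS₂ : IsLocator k S₂) (hT : IsLocator k T)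
    (hW : IsLocator k W) (hSW : S₁ ∩ S₂ ⊆ W) (hTW : T ⊆ W) {x y : M}
    (hx : x ∈ S₁ ∨ x ∈ T ∨ ∃ s ∈ S₁, ∃ t ∈ T, x = s + t)
    (hy : y ∈ S₂ ∨ y ∈ T ∨ ∃ s ∈ S₂, ∃ t ∈ T, y = s + t) :
    minf hM x y ∈ W := by
  have hmTr : ∀ z w : M, w ∈ T → minf hM z w ∈ W :=
    fun z w hw => hTW (hT.lower _ _ (minf_le_right hM z w) hw)
  have hmTl : ∀ z w : M, z ∈ T → minf hM z w ∈ W :=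
    fun z w hz => hTW (hT.lower _ _ (minf_le_left hM z w) hz)
  have hSS : ∀ z w : M, z ∈ S₁ → w ∈ S₂ → minf hM z w ∈ W := fun z w hz hw =>
    hSW ⟨hS₁.lower _ _ (minf_le_left hM z w) hz, hS₂.lower _ _ (minf_le_right hM z w) hw⟩
  rcases hx with hx | hx | ⟨s₁, hs₁, t₁, ht₁, rfl⟩
  · rcases hy with hy | hy | ⟨s₂, hs₂, t₂, ht₂, rfl⟩
    · exact hSS x y hx hy
    · exact hmTr x y hy
    · rw [minf_add_right]
      exact hW.add_mem _ (hSS x s₂ hx hs₂) _ (hmTr x t₂ ht₂)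
  · exact hmTl x y hx
  · rcases hy with hy | hy | ⟨s₂, hs₂, t₂, ht₂, rfl⟩
    · rw [minf_add_left]
      exact hW.add_mem _ (hSS s₁ y hs₁ hy) _ (hmTl t₁ y ht₁)
    · exact hmTr _ y hy
    · rw [minf_add_left, minf_add_right, minf_add_right]
      exact hW.add_mem _ (hW.add_mem _ (hSS s₁ s₂ hs₁ hs₂) _ (hmTr s₁ t₂ ht₂)) _
        (hW.add_mem _ (hmTl t₁ s₂ ht₁) _ (hmTl t₁ t₂ ht₁))

theorem locinf_distrib (hto : TotallyOrderedTSF k) (hrat : RationalTSF k) (hM : Straight M)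
    {S₁ S₂ T U₁ U₂ : Set M} (hS₁ : IsLocator k S₁) (hS₂ : IsLocator k S₂)
    (hT : IsLocator k T) (h₁ : IsLocInf k S₁ T U₁) (h₂ : IsLocInf k S₂ T U₂) :
    IsLocInf k (S₁ ∩ S₂) T (U₁ ∩ U₂) := by
  obtain ⟨hU₁loc, hSU₁, hTU₁, hU₁min⟩ := h₁
  obtain ⟨hU₂loc, hSU₂, hTU₂, hU₂min⟩ := h₂
  refine ⟨inter_locator hto hrat hU₁loc hU₂loc,
    fun v hv => ⟨hSU₁ hv.1, hSU₂ hv.2⟩, fun t ht => ⟨hTU₁ ht, hTU₂ ht⟩, ?_⟩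
  intro W hW hSW hTW v hv
  have h1 : v ∈ locJoin S₁ T :=
    hU₁min _ (locJoin_locator hS₁ hT) subset_locJoin_left subset_locJoin_right hv.1
  have h2 : v ∈ locJoin S₂ T :=
    hU₂min _ (locJoin_locator hS₂ hT) subset_locJoin_left subset_locJoin_right hv.2
  obtain ⟨u₁, hvu₁, hu₁⟩ := h1
  obtain ⟨u₂, hvu₂, hu₂⟩ := h2
  exact hW.lower v _ (le_minf hM hvu₁ hvu₂)
    (minf_mem_W hM hS₁ hS₂ hT hW hSW hTW hu₁ hu₂)

end Loc

end Stmt11Aux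

theorem stmt11 {k M : Type*} [TropSemifield k] [TropSemigroup M] [TropModule k M]
    (hto : TotallyOrderedTSF k) (hqc : QuasiCompleteTSF k) (hrat : RationalTSF k)
    (hM : Straight M) :
    Straight (TropHom k M k) ∧
    ((∀ S T : Set M, IsLocator k S → IsLocator k T → IsLocator k (S ∩ T)) ∧
     (∀ S T : Set M, IsLocator k S → IsLocator k T → ∃ U : Set M, IsLocInf k S T U) ∧
     ∀ S₁ S₂ T U₁ U₂ : Set M, IsLocator k S₁ → IsLocator k S₂ → IsLocator k T →
       IsLocInf k S₁ T U₁ → IsLocInf k S₂ T U₂ → IsLocInf k (S₁ ∩ S₂) T (U₁ ∩ U₂)) := by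
  refine ⟨Stmt11Aux.dual_straight hto hqc hrat hM, ?_, ?_, ?_⟩
  · exact fun S T hS hT => Stmt11Aux.inter_locator hto hrat hS hT
  · exact fun S T hS hT => ⟨Stmt11Aux.locJoin S T, Stmt11Aux.locJoin_isLocInf hS hT⟩
  · exact fun S₁ S₂ T U₁ U₂ hS₁ hS₂ hT h₁ h₂ =>
      Stmt11Aux.locinf_distrib hto hrat hM hS₁ hS₂ hT h₁ h₂
end

section
/- Let k be a totally ordered tropical semifield, M a k-module, and η : M → k a lattice-preserving homomorphism that is not the zero homomorphism. Then η is an extremal element of the dual module M∨. -/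
section AuxLemmas

variable {k : Type*} [TropSemifield k]

theorem aux_tle_refl (a : k) : tle a a := TropSemifield.add_idem a

theorem aux_tle_trans {a b c : k} (h1 : tle a b) (h2 : tle b c) : tle a c := by
  unfold tle at *; rw [← h2, ← add_assoc, h1]

theorem aux_tle_antisymm {a b : k} (h1 : tle a b) (h2 : tle b a) : a = b := by
  unfold tle at *; rw [← h2, add_comm, h1]

theorem aux_tle_add {a a' b b' : k} (h1 : tle a a') (h2 : tle b b') :
    tle (a + b) (a' + b') := by
  unfold tle at *; rw [add_add_add_comm, h1, h2]

theorem aux_tle_add_same {a b c : k} (h1 : tle a c) (h2 : tle b c) : tle (a + b) c := by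
  have := aux_tle_add h1 h2
  rwa [TropSemifield.add_idem] at this

end AuxLemmas

theorem stmt12 {k M : Type*} [TropSemifield k] [TropSemigroup M] [TropModule k M]
    (hto : TotallyOrderedTSF k) (η : TropHom k M k)
    (hlat : LatticePreserving η) (hne : η ≠ 0) :
    TExtremal η := by
  refine ⟨hne, ?_⟩
  intro ξ₁ ξ₂ hsum
  by_contra hcon
  push_neg at hcon
  obtain ⟨h1, h2⟩ := hcon
  -- pointwise description of the sum
  have hpt : ∀ u : M, ξ₁.toFun u + ξ₂.toFun u = η.toFun u := fun u =>
    congrArg (fun f : TropHom k M k => f.toFun u) hsum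
  have hle1 : ∀ u : M, tle (ξ₁.toFun u) (η.toFun u) := by
    intro u
    show ξ₁.toFun u + η.toFun u = η.toFun u
    rw [← hpt u, ← add_assoc, TropSemifield.add_idem]
  have hle2 : ∀ u : M, tle (ξ₂.toFun u) (η.toFun u) := by
    intro u
    show ξ₂.toFun u + η.toFun u = η.toFun u
    rw [← hpt u, add_comm (ξ₁.toFun u), ← add_assoc, TropSemifield.add_idem]
  -- witnesses where the summands differ from η
  obtain ⟨v, hv⟩ : ∃ v, ξ₁.toFun v ≠ η.toFun v := by
    by_contra h; push_neg at h; exact h1 (TropHom.ext' h)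
  obtain ⟨w, hw⟩ : ∃ w, ξ₂.toFun w ≠ η.toFun w := by
    by_contra h; push_neg at h; exact h2 (TropHom.ext' h)
  -- η v and η w are nonzero
  have hηv : η.toFun v ≠ 0 := by
    intro h0
    apply hv
    have := hle1 v
    rw [h0] at this ⊢
    rw [← this]; exact (add_zero _).symm
  have hηw : η.toFun w ≠ 0 := by
    intro h0
    apply hw
    have := hle2 w
    rw [h0] at this ⊢
    rw [← this]; exact (add_zero _).symm
  obtain ⟨b, hb⟩ := TropSemifield.exists_inv _ hηv
  obtain ⟨b', hb'⟩ := TropSemifield.exists_inv _ hηw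
  set a : k := η.toFun w * b with ha
  set v' : M := a • v with hv'
  have hsmulk : ∀ c x : k, c • x = c * x := fun c x => rfl
  have hηv' : η.toFun v' = η.toFun w := by
    rw [hv', η.map_smul', hsmulk, ha, mul_assoc, mul_comm b, hb, mul_one]
  -- ξ₁ v' ≤ η w and ξ₁ v' ≠ η w
  have hξ₁v' : ξ₁.toFun v' = a * ξ₁.toFun v := by
    rw [hv', ξ₁.map_smul', hsmulk]
  have hlev' : tle (ξ₁.toFun v') (η.toFun w) := by
    have := hle1 v'
    rwa [hηv'] at this
  have hnev' : ξ₁.toFun v' ≠ η.toFun w := by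
    intro heq
    apply hv
    have hainv : (η.toFun v * b') * a = 1 := by
      rw [ha]
      calc η.toFun v * b' * (η.toFun w * b)
          = (η.toFun v * b) * (η.toFun w * b') := by ring
        _ = 1 := by rw [hb, hb', mul_one]
    have haηv : a * η.toFun v = η.toFun w := by
      rw [ha, mul_assoc, mul_comm b, hb, mul_one]
    have hmid : a * ξ₁.toFun v = a * η.toFun v := by rw [← hξ₁v', heq, haηv]
    calc ξ₁.toFun v = 1 * ξ₁.toFun v := (one_mul _).symm
      _ = (η.toFun v * b' * a) * ξ₁.toFun v := by rw [hainv]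
      _ = (η.toFun v * b') * (a * ξ₁.toFun v) := mul_assoc _ _ _
      _ = (η.toFun v * b') * (a * η.toFun v) := by rw [hmid]
      _ = (η.toFun v * b' * a) * η.toFun v := (mul_assoc _ _ _).symm
      _ = η.toFun v := by rw [hainv, one_mul]
  -- apply lattice preservation
  obtain ⟨y, hyv', hyw, hxy⟩ :=
    hlat v' w (η.toFun w) (by rw [hηv']; exact aux_tle_refl _) (aux_tle_refl _)
  -- monotonicity of ξ₁, ξ₂
  have hm1 : tle (ξ₁.toFun y) (ξ₁.toFun v') := by
    show ξ₁.toFun y + ξ₁.toFun v' = ξ₁.toFun v'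
    rw [← ξ₁.map_add', hyv']
  have hm2 : tle (ξ₂.toFun y) (ξ₂.toFun w) := by
    show ξ₂.toFun y + ξ₂.toFun w = ξ₂.toFun w
    rw [← ξ₂.map_add', hyw]
  set s : k := ξ₁.toFun v' + ξ₂.toFun w with hs
  have hηys : tle (η.toFun y) s := by
    rw [← hpt y]; exact aux_tle_add hm1 hm2
  have hxs : tle (η.toFun w) s := aux_tle_trans hxy hηys
  have hsx : tle s (η.toFun w) := aux_tle_add_same hlev' (hle2 w)
  have hxeq : η.toFun w = s := aux_tle_antisymm hxs hsx
  rcases hto (ξ₁.toFun v') (ξ₂.toFun w) with h | h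
  · apply hw
    rw [← hxeq] at hs
    unfold tle at h
    rw [h] at hs
    exact hs.symm
  · apply hnev'
    rw [← hxeq] at hs
    unfold tle at h
    rw [add_comm, h] at hs
    exact hs.symm
end
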